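/- arXiv:1409.7793 — 5 statements merged into one kernel-verified Lean document; each statement's English description precedes it below -/
import Mathlib

section
/- For every integer n ≥ 1 define μ_n : ℝ → ℝ by μ_n(t) = e^{-nt/2} · Σ_{k=0}^{n-1} ((-t)^k / k!) · n^{k-1} · binom(n, k+1). Then μ_n(0) = 1 for all n ≥ 1, and for every t ∈ ℝ and every n ≥ 1, μ_n is differentiable at t with μ_n'(t) = -(n/2)·μ_n(t) - (n/2)·Σ_{k=1}^{n-1} μ_k(t)·μ_{n-k}(t). -/
open Finset

noncomputable section FUBM

/-- `c n a = n^(a-1) * C(n, a+1)` -/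
def fubC (n a : ℕ) : ℝ := (n : ℝ) ^ ((a : ℤ) - 1) * (n.choose (a + 1) : ℝ)

/-- the polynomial part `g_n(x) = Σ_a c n a x^a / a!` (note `g_n(x) = f_n(-x)`). -/
def fubG (n : ℕ) (x : ℝ) : ℝ := ∑ a ∈ Finset.range n, fubC n a * x ^ a / (Nat.factorial a : ℝ)

/-- power series `G(x) = Σ_k g_k(x) z^k`. -/
def fubPS (x : ℝ) : PowerSeries ℝ := PowerSeries.mk fun k => fubG k x

/-- `S p n x = [z^n] G(x)^p`. -/
def fubS (p n : ℕ) (x : ℝ) : ℝ := PowerSeries.coeff n ((fubPS x) ^ p)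

lemma fubG_zero (x : ℝ) : fubG 0 x = 0 := by simp [fubG]

lemma fubS_one (m : ℕ) : fubS 1 m = fubG m := by
  funext x; simp [fubS, fubPS, pow_one, PowerSeries.coeff_mk]

lemma coeff_mul_range (F H : PowerSeries ℝ) (m : ℕ) :
    PowerSeries.coeff m (F * H) =
      ∑ k ∈ range (m + 1), PowerSeries.coeff k F * PowerSeries.coeff (m - k) H := by
  rw [PowerSeries.coeff_mul, Finset.Nat.sum_antidiagonal_eq_sum_range_succ_mk]

lemma fubS_zero (q : ℕ) (hq : 1 ≤ q) (x : ℝ) : fubS q 0 x = 0 := by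
  have h0 : PowerSeries.constantCoeff (fubPS x) = 0 := by
    simp [fubPS, PowerSeries.constantCoeff_mk, fubG_zero]
  rw [fubS, PowerSeries.coeff_zero_eq_constantCoeff_apply, map_pow, h0, zero_pow (by omega)]

lemma fubS_succ (q : ℕ) (hq : 1 ≤ q) (m : ℕ) (x : ℝ) :
    fubS (q + 1) m x = ∑ k ∈ Ico 1 m, fubG k x * fubS q (m - k) x := by
  have h : fubS (q + 1) m x = ∑ k ∈ range (m + 1), fubG k x * fubS q (m - k) x := by
    rw [fubS, pow_succ, mul_comm, coeff_mul_range]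
    refine Finset.sum_congr rfl fun k _ => ?_
    simp [fubPS, PowerSeries.coeff_mk, fubS]
  rw [h]
  rcases Nat.eq_zero_or_pos m with rfl | hm
  · simp [fubG_zero]
  · rw [Finset.sum_range_succ, Nat.sub_self, fubS_zero q hq, mul_zero, add_zero,
      Finset.range_eq_Ico, Finset.sum_eq_sum_Ico_succ_bot hm, fubG_zero, zero_mul, zero_add]

lemma fubS_vanish : ∀ p m, m < p → ∀ x : ℝ, fubS p m x = 0 := by
  intro p
  induction p with
  | zero => omega
  | succ p ih =>
    intro m hm x
    rcases Nat.eq_zero_or_pos p with rfl | hp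
    · interval_cases m
      rw [fubS_one]; exact fubG_zero x
    · rw [fubS_succ p hp]
      refine Finset.sum_eq_zero fun k hk => ?_
      rw [mem_Ico] at hk
      rw [ih (m - k) (by omega) x, mul_zero]

lemma sum_range_choose' (N r : ℕ) : ∑ j ∈ range N, j.choose r = N.choose (r + 1) := by
  induction N with
  | zero => simp
  | succ N ih =>
    rw [Finset.sum_range_succ, ih, Nat.choose_succ_succ N r]
    exact Nat.add_comm _ _

lemma eval0 (β : ℕ → ℝ) (N : ℕ) (hN : 1 ≤ N) :
    ∑ a ∈ range N, β a * (0 : ℝ) ^ a / (Nat.factorial a : ℝ) = β 0 := by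
  rw [Finset.sum_eq_single 0]
  · simp
  · intro b _ hb
    rcases Nat.exists_eq_succ_of_ne_zero hb with ⟨c, rfl⟩
    simp [pow_succ]
  · intro h; exact absurd (Finset.mem_range.2 hN) h

lemma fubG_at_zero (n : ℕ) (hn : 1 ≤ n) : fubG n 0 = 1 := by
  rw [fubG, eval0 _ _ hn, fubC]
  have : ((0 : ℕ) : ℤ) - 1 = -1 := by norm_num
  rw [this, zpow_neg_one, Nat.choose_one_right]
  field_simp

lemma fubS_at_zero : ∀ p, 1 ≤ p → ∀ n, 1 ≤ n → fubS p n 0 = ((n - 1).choose (p - 1) : ℝ) := by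
  intro p hp
  induction p, hp using Nat.le_induction with
  | base => intro n hn; rw [fubS_one, fubG_at_zero n hn]; simp
  | succ p hp ih =>
    intro n hn
    rw [fubS_succ p hp]
    have h1 : ∀ k ∈ Ico 1 n, fubG k 0 * fubS p (n - k) 0 = ((n - k - 1).choose (p - 1) : ℝ) := by
      intro k hk
      rw [mem_Ico] at hk
      rw [fubG_at_zero k hk.1, ih (n - k) (by omega), one_mul]
    rw [Finset.sum_congr rfl h1]
    rw [← Nat.cast_sum]
    norm_cast
    rw [Finset.sum_Ico_eq_sum_range]
    have h2 : ∀ i ∈ range (n - 1), (n - (1 + i) - 1).choose (p - 1) = ((n - 1) - 1 - i).choose (p - 1) := by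
      intro i hi; rw [mem_range] at hi; congr 1; omega
    rw [Finset.sum_congr rfl h2, Finset.sum_range_reflect (fun j => j.choose (p - 1)) (n - 1),
      sum_range_choose']
    congr 1; omega


lemma coeff_X_mul_d (F : PowerSeries ℝ) (k : ℕ) :
    PowerSeries.coeff k (PowerSeries.X * (PowerSeries.derivative ℝ F)) =
      (k : ℝ) * PowerSeries.coeff k F := by
  cases k with
  | zero =>
    rw [PowerSeries.coeff_zero_eq_constantCoeff_apply, map_mul, PowerSeries.constantCoeff_X,
      zero_mul, Nat.cast_zero, zero_mul]
  | succ k =>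
    rw [PowerSeries.coeff_succ_X_mul, PowerSeries.coeff_derivative]
    push_cast; ring

lemma X_mul_d_pow (G : PowerSeries ℝ) (r : ℕ) :
    PowerSeries.X * (PowerSeries.derivative ℝ (G ^ (r + 1))) =
      (r + 1) • ((PowerSeries.X * PowerSeries.derivative ℝ G) * G ^ r) := by
  rw [Derivation.leibniz_pow]
  simp only [Nat.add_sub_cancel, smul_eq_mul, nsmul_eq_mul]
  ring

lemma fub_core (q m : ℕ) (x : ℝ) :
    ∑ k ∈ range (m + 1),
      ((k : ℝ) / 2 * fubS 2 k x * fubS q (m - k) x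
        + fubG k x * ((q : ℝ) * ((m - k : ℕ) : ℝ) / ((q : ℝ) + 1) * fubS (q + 1) (m - k) x))
    = ((q : ℝ) + 1) * (m : ℝ) / ((q : ℝ) + 2) * fubS (q + 2) m x := by
  set G := fubPS x with hG
  set DG := PowerSeries.X * (PowerSeries.derivative ℝ G) with hDG
  set W : ℝ := PowerSeries.coeff m (DG * G ^ (q + 1)) with hW
  have hcG : ∀ k, PowerSeries.coeff k G = fubG k x := fun k => PowerSeries.coeff_mk k _
  have hcS : ∀ p k, PowerSeries.coeff k (G ^ p) = fubS p k x := fun p k => rfl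
  -- Claim A
  have hA : ∑ k ∈ range (m + 1), (k : ℝ) * fubS 2 k x * fubS q (m - k) x = 2 * W := by
    have h1 : ∀ k ∈ range (m + 1), (k : ℝ) * fubS 2 k x * fubS q (m - k) x
        = PowerSeries.coeff k (PowerSeries.X * (PowerSeries.derivative ℝ (G ^ 2)))
          * PowerSeries.coeff (m - k) (G ^ q) := by
      intro k _
      rw [coeff_X_mul_d, hcS, hcS]
    rw [Finset.sum_congr rfl h1, ← coeff_mul_range]
    have h2 : (PowerSeries.X * (PowerSeries.derivative ℝ (G ^ 2))) * G ^ q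
        = (2 : ℕ) • (DG * G ^ (q + 1)) := by
      have := X_mul_d_pow G 1
      rw [show (1 : ℕ) + 1 = 2 from rfl] at this
      rw [this]
      simp only [nsmul_eq_mul, hDG]
      ring
    rw [h2, map_nsmul, nsmul_eq_mul]
    norm_num [hW]
  -- Claim B
  have hB : ∑ k ∈ range (m + 1), fubG k x * (((m - k : ℕ) : ℝ) * fubS (q + 1) (m - k) x)
      = ((q : ℝ) + 1) * W := by
    have h1 : ∀ k ∈ range (m + 1), fubG k x * (((m - k : ℕ) : ℝ) * fubS (q + 1) (m - k) x)
        = PowerSeries.coeff k G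
          * PowerSeries.coeff (m - k) (PowerSeries.X * (PowerSeries.derivative ℝ (G ^ (q + 1)))) := by
      intro k _
      rw [coeff_X_mul_d, hcS, hcG]
    rw [Finset.sum_congr rfl h1, ← coeff_mul_range]
    have h2 : G * (PowerSeries.X * (PowerSeries.derivative ℝ (G ^ (q + 1))))
        = (q + 1) • (DG * G ^ (q + 1)) := by
      rw [X_mul_d_pow G q]
      simp only [nsmul_eq_mul, hDG]
      ring
    rw [h2, map_nsmul, nsmul_eq_mul]
    push_cast
    rw [hW]
  -- Claim C
  have hC : (m : ℝ) * fubS (q + 2) m x = ((q : ℝ) + 2) * W := by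
    have h1 : (m : ℝ) * fubS (q + 2) m x
        = PowerSeries.coeff m (PowerSeries.X * (PowerSeries.derivative ℝ (G ^ (q + 2)))) := by
      rw [coeff_X_mul_d, hcS]
    have h2 : PowerSeries.X * (PowerSeries.derivative ℝ (G ^ (q + 2)))
        = (q + 2) • (DG * G ^ (q + 1)) := by
      have := X_mul_d_pow G (q + 1)
      rw [show q + 1 + 1 = q + 2 from rfl] at this
      rw [this]
    rw [h1, h2, map_nsmul, nsmul_eq_mul]
    push_cast
    rw [hW]
  -- assemble
  have hq1 : (q : ℝ) + 1 ≠ 0 := by positivity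
  have hq2 : (q : ℝ) + 2 ≠ 0 := by positivity
  have hsplit : ∑ k ∈ range (m + 1),
      ((k : ℝ) / 2 * fubS 2 k x * fubS q (m - k) x
        + fubG k x * ((q : ℝ) * ((m - k : ℕ) : ℝ) / ((q : ℝ) + 1) * fubS (q + 1) (m - k) x))
      = (1 / 2) * (∑ k ∈ range (m + 1), (k : ℝ) * fubS 2 k x * fubS q (m - k) x)
        + ((q : ℝ) / ((q : ℝ) + 1))
          * (∑ k ∈ range (m + 1), fubG k x * (((m - k : ℕ) : ℝ) * fubS (q + 1) (m - k) x)) := by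
    rw [Finset.mul_sum, Finset.mul_sum, ← Finset.sum_add_distrib]
    refine Finset.sum_congr rfl fun k _ => ?_
    field_simp
  rw [hsplit, hA, hB]
  have hS : fubS (q + 2) m x = ((q : ℝ) + 2)⁻¹ * (((q : ℝ) + 2) * fubS (q + 2) m x) := by
    field_simp
  rw [show ((q : ℝ) + 1) * (m : ℝ) / ((q : ℝ) + 2) * fubS (q + 2) m x
      = (((q : ℝ) + 1) / ((q : ℝ) + 2)) * ((m : ℝ) * fubS (q + 2) m x) by ring, hC]
  field_simp
  ring


lemma sum_range_to_Ico (m : ℕ) (f : ℕ → ℝ) (h0 : f 0 = 0) (hm : f m = 0) :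
    ∑ k ∈ range (m + 1), f k = ∑ k ∈ Ico 1 m, f k := by
  rcases Nat.eq_zero_or_pos m with rfl | hm'
  · simp [h0]
  · rw [Finset.sum_range_succ, hm, add_zero, Finset.range_eq_Ico,
      Finset.sum_eq_sum_Ico_succ_bot hm', h0, zero_add]

lemma fub_helper (q m : ℕ) (hq : 1 ≤ q) (x : ℝ)
    (Hg : ∀ k ∈ Ico 1 m, HasDerivAt (fubG k) ((k : ℝ) / 2 * fubS 2 k x) x)
    (HS : ∀ k ∈ Ico 1 m, HasDerivAt (fubS q (m - k))
      ((q : ℝ) * ((m - k : ℕ) : ℝ) / ((q : ℝ) + 1) * fubS (q + 1) (m - k) x) x) :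
    HasDerivAt (fubS (q + 1) m)
      (((q : ℝ) + 1) * (m : ℝ) / ((q : ℝ) + 2) * fubS (q + 2) m x) x := by
  have hfun : fubS (q + 1) m = fun y => ∑ k ∈ Ico 1 m, fubG k y * fubS q (m - k) y :=
    funext fun y => fubS_succ q hq m y
  rw [hfun]
  have hd : HasDerivAt (fun y => ∑ k ∈ Ico 1 m, fubG k y * fubS q (m - k) y)
      (∑ k ∈ Ico 1 m, (((k : ℝ) / 2 * fubS 2 k x) * fubS q (m - k) x
        + fubG k x * ((q : ℝ) * ((m - k : ℕ) : ℝ) / ((q : ℝ) + 1) * fubS (q + 1) (m - k) x))) x :=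
    HasDerivAt.fun_sum fun k hk => (Hg k hk).mul (HS k hk)
  have hval : ∑ k ∈ Ico 1 m, (((k : ℝ) / 2 * fubS 2 k x) * fubS q (m - k) x
        + fubG k x * ((q : ℝ) * ((m - k : ℕ) : ℝ) / ((q : ℝ) + 1) * fubS (q + 1) (m - k) x))
      = ((q : ℝ) + 1) * (m : ℝ) / ((q : ℝ) + 2) * fubS (q + 2) m x := by
    rw [← fub_core q m x]
    refine (sum_range_to_Ico m _ ?_ ?_).symm
    · simp [fubG_zero]
    · rw [Nat.sub_self, fubS_zero q hq]
      simp
  rw [← hval]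
  exact hd

lemma fub_DS (n : ℕ) (hn : 1 ≤ n)
    (IH : ∀ m, m < n → ∀ x : ℝ, HasDerivAt (fubG m) ((m : ℝ) / 2 * fubS 2 m x) x) :
    ∀ i, 1 ≤ i → ∀ m, m ≤ n - 1 → ∀ x : ℝ,
      HasDerivAt (fubS i m) ((i : ℝ) * (m : ℝ) / ((i : ℝ) + 1) * fubS (i + 1) m x) x := by
  intro i hi
  induction i, hi using Nat.le_induction with
  | base =>
    intro m hm x
    rw [fubS_one]
    have h := IH m (by omega) x
    convert h using 1
    push_cast
    ring
  | succ i hi ih =>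
    intro m hm x
    have h := fub_helper i m hi x
      (fun k hk => IH k (by rw [mem_Ico] at hk; omega) x)
      (fun k hk => ih (m - k) (by omega) x)
    convert h using 2 <;> push_cast <;> ring

lemma fub_DStop (n : ℕ) (hn : 1 ≤ n)
    (IH : ∀ m, m < n → ∀ x : ℝ, HasDerivAt (fubG m) ((m : ℝ) / 2 * fubS 2 m x) x)
    (q : ℕ) (hq : 2 ≤ q) (x : ℝ) :
    HasDerivAt (fubS q n) ((q : ℝ) * (n : ℝ) / ((q : ℝ) + 1) * fubS (q + 1) n x) x := by
  obtain ⟨i, rfl⟩ : ∃ i, q = i + 1 := ⟨q - 1, by omega⟩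
  have hi : 1 ≤ i := by omega
  have h := fub_helper i n hi x
    (fun k hk => IH k (by rw [mem_Ico] at hk; omega) x)
    (fun k hk => fub_DS n hn IH i hi (n - k) (by rw [mem_Ico] at hk; omega) x)
  convert h using 2 <;> push_cast <;> ring

def fubTau (p n a : ℕ) : ℝ :=
  (p : ℝ) * (n : ℝ) ^ a / ((p : ℝ) + (a : ℝ)) * ((n - 1).choose (p + a - 1) : ℝ)

def fubE (p n : ℕ) (x : ℝ) : ℝ := ∑ a ∈ range n, fubTau p n a * x ^ a / (Nat.factorial a : ℝ)

lemma fub_polyder (β : ℕ → ℝ) (N : ℕ) (hβ : β N = 0) (x : ℝ) :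
    HasDerivAt (fun y => ∑ a ∈ range N, β a * y ^ a / (Nat.factorial a : ℝ))
      (∑ a ∈ range N, β (a + 1) * x ^ a / (Nat.factorial a : ℝ)) x := by
  simp only [mul_div_right_comm]
  have h : HasDerivAt (fun y => ∑ a ∈ range N, β a / (Nat.factorial a : ℝ) * y ^ a)
      (∑ a ∈ range N, β a / (Nat.factorial a : ℝ) * ((a : ℝ) * x ^ (a - 1))) x :=
    HasDerivAt.fun_sum fun a _ => (hasDerivAt_pow a x).const_mul (β a / (Nat.factorial a : ℝ))
  have hval : ∑ a ∈ range N, β a / (Nat.factorial a : ℝ) * ((a : ℝ) * x ^ (a - 1))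
      = ∑ a ∈ range N, β (a + 1) / (Nat.factorial a : ℝ) * x ^ a := by
    rcases Nat.eq_zero_or_pos N with rfl | hN
    · simp
    · obtain ⟨M, rfl⟩ : ∃ M, N = M + 1 := ⟨N - 1, by omega⟩
      rw [Finset.sum_range_succ' (fun a => β a / (Nat.factorial a : ℝ) * ((a : ℝ) * x ^ (a - 1))) M]
      rw [Finset.sum_range_succ (fun a => β (a + 1) / (Nat.factorial a : ℝ) * x ^ a) M]
      rw [hβ]
      simp only [Nat.cast_zero, zero_mul, mul_zero, add_zero, zero_div, zero_mul]
      refine Finset.sum_congr rfl fun i _ => ?_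
      have hfact : ((Nat.factorial (i + 1) : ℕ) : ℝ) = ((i : ℝ) + 1) * (Nat.factorial i : ℝ) := by
        rw [Nat.factorial_succ]; push_cast; ring
      have hne : (Nat.factorial i : ℝ) ≠ 0 := Nat.cast_ne_zero.2 (Nat.factorial_ne_zero i)
      have hne1 : (i : ℝ) + 1 ≠ 0 := by positivity
      rw [hfact]
      simp only [Nat.add_sub_cancel]
      push_cast
      field_simp
  rw [← hval]
  exact h

lemma fubTau_succ (p n a : ℕ) (hp : 1 ≤ p) :
    fubTau p n (a + 1) = (p : ℝ) * (n : ℝ) / ((p : ℝ) + 1) * fubTau (p + 1) n a := by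
  rw [fubTau, fubTau]
  have h1 : p + (a + 1) - 1 = p + a := by omega
  have h2 : p + 1 + a - 1 = p + a := by omega
  rw [h1, h2]
  have e1 : (p : ℝ) + ((a : ℝ) + 1) ≠ 0 := by positivity
  have e2 : (p : ℝ) + 1 ≠ 0 := by positivity
  have e3 : ((p : ℝ) + 1) + (a : ℝ) ≠ 0 := by positivity
  push_cast
  field_simp
  ring

lemma fubTau_zero (p n : ℕ) (hp : 1 ≤ p) :
    fubTau p n 0 = ((n - 1).choose (p - 1) : ℝ) := by
  rw [fubTau]
  have hpn : (p : ℝ) ≠ 0 := by positivity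
  simp only [pow_zero, Nat.cast_zero, add_zero, Nat.add_zero, mul_one]
  rw [div_self hpn, one_mul]

lemma fubTau_top (p n : ℕ) (hp : 1 ≤ p) (hn : 1 ≤ n) : fubTau p n n = 0 := by
  rw [fubTau, Nat.choose_eq_zero_of_lt (by omega)]
  simp

lemma fubE_at_zero (p n : ℕ) (hp : 1 ≤ p) (hn : 1 ≤ n) :
    fubE p n 0 = ((n - 1).choose (p - 1) : ℝ) := by
  rw [fubE, eval0 _ _ hn, fubTau_zero p n hp]

lemma fubE_deriv (p n : ℕ) (hp : 1 ≤ p) (hn : 1 ≤ n) (x : ℝ) :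
    HasDerivAt (fubE p n) ((p : ℝ) * (n : ℝ) / ((p : ℝ) + 1) * fubE (p + 1) n x) x := by
  have h := fub_polyder (fubTau p n) n (fubTau_top p n hp hn) x
  have hval : ∑ a ∈ range n, fubTau p n (a + 1) * x ^ a / (Nat.factorial a : ℝ)
      = (p : ℝ) * (n : ℝ) / ((p : ℝ) + 1) * fubE (p + 1) n x := by
    rw [fubE, Finset.mul_sum]
    refine Finset.sum_congr rfl fun a _ => ?_
    rw [fubTau_succ p n a hp]
    ring
  rw [hval] at h
  exact h

lemma fub_down (n : ℕ) (hn : 1 ≤ n)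
    (IH : ∀ m, m < n → ∀ x : ℝ, HasDerivAt (fubG m) ((m : ℝ) / 2 * fubS 2 m x) x) :
    ∀ d, d ≤ n - 1 → fubS (n + 1 - d) n = fubE (n + 1 - d) n := by
  intro d
  induction d with
  | zero =>
    intro _
    funext x
    rw [Nat.sub_zero, fubS_vanish (n + 1) n (by omega) x, fubE]
    symm
    refine Finset.sum_eq_zero fun a _ => ?_
    rw [fubTau, Nat.choose_eq_zero_of_lt (by omega)]
    simp
  | succ d ihd =>
    intro hd
    have hIH := ihd (by omega)
    set p := n - d with hp
    have hp2 : 2 ≤ p := by omega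
    have hp1 : 1 ≤ p := by omega
    have hidx : n + 1 - d = p + 1 := by omega
    have hidx2 : n + 1 - (d + 1) = p := by omega
    rw [hidx] at hIH
    rw [hidx2]
    have hder : ∀ x : ℝ, HasDerivAt (fubS p n)
        ((p : ℝ) * (n : ℝ) / ((p : ℝ) + 1) * fubE (p + 1) n x) x := by
      intro x
      have h := fub_DStop n hn IH p hp2 x
      rw [hIH] at h
      exact h
    have hder2 : ∀ x : ℝ, HasDerivAt (fubE p n)
        ((p : ℝ) * (n : ℝ) / ((p : ℝ) + 1) * fubE (p + 1) n x) x :=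
      fubE_deriv p n hp1 hn
    have hdiff : ∀ x : ℝ, HasDerivAt (fun y => fubS p n y - fubE p n y) 0 x := by
      intro x
      have := (hder x).sub (hder2 x)
      rwa [sub_self] at this
    have hconst : ∀ x : ℝ, fubS p n x - fubE p n x = fubS p n 0 - fubE p n 0 := by
      intro x
      exact is_const_of_deriv_eq_zero (fun y => (hdiff y).differentiableAt)
        (fun y => (hdiff y).deriv) x 0
    funext x
    have h0 : fubS p n 0 - fubE p n 0 = 0 := by
      rw [fubS_at_zero p hp1 n hn, fubE_at_zero p n hp1 hn, sub_self]
    have := hconst x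
    rw [h0] at this
    linarith [this]

lemma fubC_top (n : ℕ) : fubC n n = 0 := by
  rw [fubC, Nat.choose_eq_zero_of_lt (by omega)]
  simp

lemma fubC_succ (n a : ℕ) (hn : 1 ≤ n) :
    fubC n (a + 1) = (n : ℝ) / 2 * fubTau 2 n a := by
  rw [fubC, fubTau]
  have h1 : 2 + a - 1 = a + 1 := by omega
  rw [h1]
  have hz : ((a : ℤ) + 1) - 1 = (a : ℤ) := by ring
  have hcast : (((a + 1 : ℕ) : ℤ)) - 1 = (a : ℤ) := by push_cast; ring
  rw [hcast, zpow_natCast, show a + 1 + 1 = a + 2 from rfl]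
  have hnat : n * (n - 1).choose (a + 1) = n.choose (a + 2) * (a + 2) := by
    have := Nat.add_one_mul_choose_eq (n - 1) (a + 1)
    have hs : n - 1 + 1 = n := by omega
    rw [hs] at this
    exact this
  have h2 : ((2 : ℝ) + (a : ℝ)) ≠ 0 := by positivity
  have hreal : (n : ℝ) * ((n - 1).choose (a + 1) : ℝ) = (n.choose (a + 2) : ℝ) * ((a : ℝ) + 2) := by
    exact_mod_cast congrArg (fun m : ℕ => (m : ℝ)) hnat
  field_simp
  linear_combination (-2 : ℝ) * hreal

lemma fub_main : ∀ n : ℕ, ∀ x : ℝ, HasDerivAt (fubG n) ((n : ℝ) / 2 * fubS 2 n x) x := by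
  intro n
  induction n using Nat.strong_induction_on with
  | _ n IH =>
  rcases Nat.eq_zero_or_pos n with rfl | hn
  · intro x
    have hfun : fubG 0 = fun _ : ℝ => (0 : ℝ) := funext fun y => fubG_zero y
    rw [hfun]
    have : ((0 : ℕ) : ℝ) / 2 * fubS 2 0 x = 0 := by
      rw [fubS_zero 2 (by omega) x]; simp
    rw [this]
    exact hasDerivAt_const x 0
  · intro x
    have hS2 : fubS 2 n = fubE 2 n := by
      have h := fub_down n hn IH (n - 1) (le_refl _)
      have hidx : n + 1 - (n - 1) = 2 := by omega
      rwa [hidx] at h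
    have hD := fub_polyder (fubC n) n (fubC_top n) x
    have hval : ∑ a ∈ range n, fubC n (a + 1) * x ^ a / (Nat.factorial a : ℝ)
        = (n : ℝ) / 2 * fubS 2 n x := by
      rw [hS2, fubE, Finset.mul_sum]
      refine Finset.sum_congr rfl fun a _ => ?_
      rw [fubC_succ n a hn]
      ring
    rw [hval] at hD
    exact hD

lemma fubS2_Ico (n : ℕ) (x : ℝ) :
    fubS 2 n x = ∑ k ∈ Ico 1 n, fubG k x * fubG (n - k) x := by
  rw [fubS_succ 1 (le_refl 1) n x]
  refine Finset.sum_congr rfl fun k _ => ?_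
  rw [fubS_one]

lemma fub_mu_eq (n : ℕ) (t : ℝ) :
    Real.exp (-((n : ℝ) * t) / 2) *
      ∑ k ∈ Finset.range n,
        ((-t) ^ k / (Nat.factorial k : ℝ)) * (n : ℝ) ^ ((k : ℤ) - 1) * (n.choose (k + 1) : ℝ)
    = Real.exp (-((n : ℝ) * t) / 2) * fubG n (-t) := by
  congr 1
  rw [fubG]
  refine Finset.sum_congr rfl fun k _ => ?_
  rw [fubC]
  ring

end FUBM

/-- The `n`-th moment of the spectral measure of the free unitary Brownian motion at time `t`:
`μ_n(t) = e^{-nt/2} · Σ_{k=0}^{n-1} ((-t)^k / k!) · n^{k-1} · binom(n, k+1)`. -/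
noncomputable def freeUnitaryMoment (n : ℕ) (t : ℝ) : ℝ :=
  Real.exp (-((n : ℝ) * t) / 2) *
    ∑ k ∈ Finset.range n,
      ((-t) ^ k / (Nat.factorial k : ℝ)) * (n : ℝ) ^ ((k : ℤ) - 1) * (n.choose (k + 1) : ℝ)

/-- `μ_n(0) = 1` for all `n ≥ 1`, and each `μ_n` is differentiable with
`μ_n'(t) = -(n/2)·μ_n(t) - (n/2)·Σ_{k=1}^{n-1} μ_k(t)·μ_{n-k}(t)`. -/
theorem freeUnitaryMoment_initial_and_deriv :
    ∀ n : ℕ, 1 ≤ n →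
      freeUnitaryMoment n 0 = 1 ∧
        ∀ t : ℝ,
          HasDerivAt (freeUnitaryMoment n)
            (-((n : ℝ) / 2) * freeUnitaryMoment n t -
              ((n : ℝ) / 2) *
                ∑ k ∈ Finset.Ico 1 n, freeUnitaryMoment k t * freeUnitaryMoment (n - k) t)
            t := by
  have hfun : ∀ m : ℕ, freeUnitaryMoment m
      = fun t => Real.exp (-((m : ℝ) * t) / 2) * fubG m (-t) := by
    intro m
    funext t
    rw [freeUnitaryMoment]
    exact fub_mu_eq m t
  intro n hn
  constructor
  · rw [hfun n]
    simp [fubG_at_zero n hn]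
  · intro t
    have h1 : HasDerivAt (fun t : ℝ => -((n : ℝ) * t) / 2) (-((n : ℝ) / 2)) t := by
      have h0 : (fun t : ℝ => -((n : ℝ) * t) / 2) = fun t : ℝ => (-((n : ℝ) / 2)) * t := by
        funext s; ring
      rw [h0]
      simpa using (hasDerivAt_id t).const_mul (-((n : ℝ) / 2))
    have hexp := h1.exp
    have hneg : HasDerivAt (fun s : ℝ => -s) (-1 : ℝ) t := hasDerivAt_neg t
    have hg : HasDerivAt (fun s : ℝ => fubG n (-s)) (((n : ℝ) / 2 * fubS 2 n (-t)) * (-1)) t :=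
      HasDerivAt.comp t (fub_main n (-t)) hneg
    have hprod := hexp.mul hg
    have hsum : ∑ k ∈ Finset.Ico 1 n, freeUnitaryMoment k t * freeUnitaryMoment (n - k) t
        = Real.exp (-((n : ℝ) * t) / 2) * fubS 2 n (-t) := by
      rw [fubS2_Ico n (-t), Finset.mul_sum]
      refine Finset.sum_congr rfl fun k hk => ?_
      rw [Finset.mem_Ico] at hk
      rw [hfun k, hfun (n - k)]
      simp only []
      have hcast : ((n - k : ℕ) : ℝ) = (n : ℝ) - (k : ℝ) := Nat.cast_sub (by omega)
      rw [hcast]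
      rw [show (Real.exp (-((k : ℝ) * t) / 2) * fubG k (-t))
            * (Real.exp (-(((n : ℝ) - (k : ℝ)) * t) / 2) * fubG (n - k) (-t))
          = (Real.exp (-((k : ℝ) * t) / 2) * Real.exp (-(((n : ℝ) - (k : ℝ)) * t) / 2))
            * (fubG k (-t) * fubG (n - k) (-t)) from by ring]
      rw [← Real.exp_add]
      congr 1
      ring
    rw [hfun n] at *
    rw [hsum]
    refine hprod.congr_deriv ?_
    ring
end

section
/- (Duhamel's formula) For every p ≥ 1 and all matrices A, B ∈ M_p(ℂ), exp(A + B) − exp(A) = ∫_0^1 exp(s·(A+B)) · B · exp((1−s)·A) ds, where exp denotes the matrix exponential and the integral is the Bochner integral of the M_p(ℂ)-valued continuous function s ↦ exp(s(A+B))·B·exp((1−s)A) over [0,1] with Lebesgue measure. -/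
open MeasureTheory

attribute [local instance] Matrix.normedAddCommGroup Matrix.normedSpace

theorem duhamel_entry_deriv (p : ℕ) (A B : Matrix (Fin p) (Fin p) ℂ) (s : ℝ) (i j : Fin p) :
    HasDerivAt
      (fun t : ℝ => (NormedSpace.exp (t • (A + B)) * NormedSpace.exp ((1 - t) • A)) i j)
      ((NormedSpace.exp (s • (A + B)) * B * NormedSpace.exp ((1 - s) • A)) i j) s := by
  have hexp : (NormedSpace.exp : Matrix (Fin p) (Fin p) ℂ → Matrix (Fin p) (Fin p) ℂ)
      = NormedSpace.exp := by
    letI : NormedRing (Matrix (Fin p) (Fin p) ℂ) := Matrix.linftyOpNormedRing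
    letI : NormedAlgebra ℝ (Matrix (Fin p) (Fin p) ℂ) := Matrix.linftyOpNormedAlgebra
    letI : NormedAlgebra ℂ (Matrix (Fin p) (Fin p) ℂ) := Matrix.linftyOpNormedAlgebra
    rfl
  rw [hexp]
  letI : NormedRing (Matrix (Fin p) (Fin p) ℂ) := Matrix.linftyOpNormedRing
  letI : NormedAddCommGroup (Matrix (Fin p) (Fin p) ℂ) :=
    NonUnitalNormedRing.toNormedAddCommGroup
  letI : NormedAlgebra ℝ (Matrix (Fin p) (Fin p) ℂ) := Matrix.linftyOpNormedAlgebra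
  letI : NormedSpace ℝ (Matrix (Fin p) (Fin p) ℂ) := NormedAlgebra.toNormedSpace _
  letI : CompleteSpace (Matrix (Fin p) (Fin p) ℂ) := FiniteDimensional.complete ℝ _
  have hc : HasDerivAt (fun t : ℝ => 1 - t) (-1) s := by
    simpa using (hasDerivAt_id s).const_sub 1
  have h1 := hasDerivAt_exp_smul_const (𝕂 := ℝ) (A + B) s
  have h2 := (hasDerivAt_exp_smul_const (𝕂 := ℝ) A (1 - s)).scomp s hc
  have key := h1.mul h2
  simp only [Function.comp_def] at key
  have heq : NormedSpace.exp (s • (A + B)) * (A + B) * NormedSpace.exp ((1 - s) • A) +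
      NormedSpace.exp (s • (A + B)) *
        ((-1 : ℝ) • (NormedSpace.exp ((1 - s) • A) * A)) =
      NormedSpace.exp (s • (A + B)) * B * NormedSpace.exp ((1 - s) • A) := by
    have hcm : NormedSpace.exp ((1 - s) • A) * A = A * NormedSpace.exp ((1 - s) • A) :=
      (((Commute.refl A).smul_left (1 - s)).exp_left).eq
    rw [neg_one_smul, hcm]
    noncomm_ring
  replace key := key.congr_deriv heq
  let ev : Matrix (Fin p) (Fin p) ℂ →L[ℝ] ℂ :=
    LinearMap.toContinuousLinearMap
      ((LinearMap.proj j).comp (LinearMap.proj (R := ℝ)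
        (φ := fun _ : Fin p => Fin p → ℂ) i))
  exact ev.hasFDerivAt.comp_hasDerivAt s key

/-- Duhamel's formula for `p × p` complex matrices:
`exp(A + B) − exp(A) = ∫_0^1 exp(s(A+B)) · B · exp((1−s)A) ds`,
where the integral is the Bochner integral over `[0,1]` with Lebesgue measure. -/
theorem matrix_duhamel (p : ℕ) (hp : 1 ≤ p) (A B : Matrix (Fin p) (Fin p) ℂ) :
    NormedSpace.exp (A + B) - NormedSpace.exp A =
      ∫ s in Set.Icc (0 : ℝ) 1,
        NormedSpace.exp (s • (A + B)) * B * NormedSpace.exp ((1 - s) • A) := by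
  set f : ℝ → Matrix (Fin p) (Fin p) ℂ := fun s =>
    NormedSpace.exp (s • (A + B)) * B * NormedSpace.exp ((1 - s) • A) with hf
  have hfc : Continuous f := by
    letI : NormedRing (Matrix (Fin p) (Fin p) ℂ) := Matrix.linftyOpNormedRing
    letI : NormedAlgebra ℂ (Matrix (Fin p) (Fin p) ℂ) := Matrix.linftyOpNormedAlgebra
    letI : NormedAddCommGroup (Matrix (Fin p) (Fin p) ℂ) :=
      NonUnitalNormedRing.toNormedAddCommGroup
    letI : NormedSpace ℂ (Matrix (Fin p) (Fin p) ℂ) := NormedAlgebra.toNormedSpace _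
    letI : CompleteSpace (Matrix (Fin p) (Fin p) ℂ) := FiniteDimensional.complete ℂ _
    letI : NormedAlgebra ℚ (Matrix (Fin p) (Fin p) ℂ) := NormedAlgebra.restrictScalars ℚ ℂ _
    exact ((NormedSpace.exp_continuous.comp
        (continuous_id.smul continuous_const)).mul continuous_const).mul
      (NormedSpace.exp_continuous.comp
        ((continuous_const.sub continuous_id).smul continuous_const))
  letI : ContinuousENorm (Matrix (Fin p) (Fin p) ℂ) := SeminormedAddGroup.toContinuousENorm
  have hI : IntegrableOn f (Set.Icc (0 : ℝ) 1) volume := hfc.integrableOn_Icc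
  ext i j
  let ev : Matrix (Fin p) (Fin p) ℂ →L[ℝ] ℂ :=
    LinearMap.toContinuousLinearMap
      ((LinearMap.proj j).comp (LinearMap.proj (R := ℝ)
        (φ := fun _ : Fin p => Fin p → ℂ) i))
  have hev : (∫ s in Set.Icc (0 : ℝ) 1, f s) i j = ∫ s in Set.Icc (0 : ℝ) 1, f s i j :=
    (ev.integral_comp_comm hI).symm
  rw [hev]
  have hci : IntervalIntegrable (fun s : ℝ => f s i j) volume 0 1 := by
    refine Continuous.intervalIntegrable ?_ 0 1
    exact (continuous_apply j).comp ((continuous_apply i).comp hfc)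
  have hftc := intervalIntegral.integral_eq_sub_of_hasDerivAt
    (f := fun t : ℝ => (NormedSpace.exp (t • (A + B)) * NormedSpace.exp ((1 - t) • A)) i j)
    (fun s _ => duhamel_entry_deriv p A B s i j) hci
  rw [MeasureTheory.integral_Icc_eq_integral_Ioc,
    ← intervalIntegral.integral_of_le (zero_le_one (α := ℝ)), hf] at *
  rw [hftc]
  simp [one_smul, zero_smul, sub_self, NormedSpace.exp_zero, Matrix.sub_apply]
end

section
/- (Iterated Duhamel / Dyson expansion with remainder) Let p ≥ 1, let L, D ∈ M_p(ℂ), and let g ≥ 1. For j ≥ 1 let Δ_j = {(s_1,…,s_j) ∈ ℝ^j : 0 ≤ s_1 ≤ s_2 ≤ … ≤ s_j ≤ 1} equipped with j-dimensional Lebesgue measure, and define I_j = ∫_{Δ_j} exp(s_1 L)·D·exp((s_2−s_1)L)·D ⋯ D·exp((1−s_j)L) ds (a product with j factors of D interlaced with j+1 exponentials of increments of L), I_0 = exp(L), and R_g = ∫_{Δ_g} exp(s_1(L+D))·D·exp((s_2−s_1)L)·D ⋯ D·exp((1−s_g)L) ds. Then exp(L + D) = Σ_{j=0}^{g−1} I_j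 + R_g. -/
open MeasureTheory

namespace DysonAux

open NormedSpace Filter

noncomputable def lnorm {p : ℕ} (X : Matrix (Fin p) (Fin p) ℂ) : ℝ :=
  (((Finset.univ : Finset (Fin p)).sup fun i => ∑ j, ‖X i j‖₊ : NNReal) : ℝ)

lemma coe_smul_mat {p : ℕ} (v : ℝ) (A : Matrix (Fin p) (Fin p) ℂ) :
    (v : ℂ) • A = v • A := by
  ext i j
  simp [Matrix.smul_apply, Complex.real_smul]

section Linfty

attribute [local instance] Matrix.linftyOpNormedAddCommGroup Matrix.linftyOpNormedRing
  Matrix.linftyOpNormedAlgebra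

variable {p : ℕ}

lemma lin_core (A B : Matrix (Fin p) (Fin p) ℂ) (t u : ℝ) :
    Tendsto (fun v : ℝ => ‖v - u‖⁻¹ * lnorm
        (exp (v • A) * exp ((t - v) • B)
          - exp (u • A) * exp ((t - u) • B)
          - (v - u) • (exp (u • A) * (A - B) * exp ((t - u) • B))))
      (nhds u) (nhds 0) := by
  have hre : ∀ (M N : Matrix (Fin p) (Fin p) ℂ) (w : ℝ),
      HasDerivAt (fun z : ℂ => exp (z • M)) N (w : ℂ) →
      HasDerivAt (fun v : ℝ => exp ((v : ℂ) • M)) N w := by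
    intro M N w h
    have hF := (h.hasFDerivAt.restrictScalars ℝ).comp w Complex.ofRealCLM.hasFDerivAt
    have h5 := hF.hasDerivAt
    exact h5.congr_deriv (one_smul ℂ N)
  have h1 : HasDerivAt (fun v : ℝ => exp ((v : ℂ) • A)) (exp ((u : ℂ) • A) * A) u :=
    hre A _ u (hasDerivAt_exp_smul_const A (u : ℂ))
  have h2 : HasDerivAt (fun v : ℝ => exp ((((t - v) : ℝ) : ℂ) • B))
      ((-1 : ℝ) • (B * exp ((((t - u) : ℝ) : ℂ) • B))) u := by
    have hg : HasDerivAt (fun y : ℝ => exp ((y : ℂ) • B))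
        (B * exp ((((t - u) : ℝ) : ℂ) • B)) (t - u) :=
      hre B _ (t - u) (hasDerivAt_exp_smul_const' B (((t - u) : ℝ) : ℂ))
    exact hg.scomp u ((hasDerivAt_id u).const_sub t)
  have h3 := h1.mul h2
  simp only [coe_smul_mat] at h1 h2 h3
  have hd : exp (u • A) * A * exp ((t - u) • B) +
      exp (u • A) * ((-1 : ℝ) • (B * exp ((t - u) • B))) =
      exp (u • A) * (A - B) * exp ((t - u) • B) := by
    rw [neg_one_smul ℝ]
    noncomm_ring
  rw [hd] at h3
  have h4 := hasDerivAt_iff_tendsto.mp h3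
  refine h4.congr fun v => ?_
  have hn : ∀ X : Matrix (Fin p) (Fin p) ℂ, ‖X‖ = lnorm X := fun X => Matrix.linfty_opNorm_def X
  rw [hn]
  rfl

end Linfty


end DysonAux

attribute [local instance] Matrix.normedAddCommGroup Matrix.normedSpace

noncomputable instance matCENorm {p : ℕ} : ContinuousENorm (Matrix (Fin p) (Fin p) ℂ) := by
  exact @SeminormedAddGroup.toContinuousENorm (Matrix (Fin p) (Fin p) ℂ) _

noncomputable instance matESAM {p : ℕ} : ESeminormedAddMonoid (Matrix (Fin p) (Fin p) ℂ) := by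
  exact (NormedAddCommGroup.toENormedAddCommMonoid (E := Matrix (Fin p) (Fin p) ℂ)).toESeminormedAddMonoid

/-- The ordered simplex `Δ_j = {0 ≤ s_1 ≤ s_2 ≤ … ≤ s_j ≤ 1} ⊆ ℝ^j`. -/
def orderedSimplex (j : ℕ) : Set (Fin j → ℝ) :=
  {s | Monotone s ∧ ∀ i, s i ∈ Set.Icc (0 : ℝ) 1}

/-- The integrand of the iterated Duhamel (Dyson) expansion:
`dysonProd L D j s a = exp((s_1 − a)L) · D · exp((s_2 − s_1)L) · D ⋯ D · exp((1 − s_j)L)`,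
a product with `j` factors of `D` interlaced with `j+1` exponentials of increments of `L`. -/
noncomputable def dysonProd {p : ℕ} (L D : Matrix (Fin p) (Fin p) ℂ) :
    (j : ℕ) → (Fin j → ℝ) → ℝ → Matrix (Fin p) (Fin p) ℂ
  | 0, _, a => NormedSpace.exp ((1 - a) • L)
  | j + 1, s, a =>
      NormedSpace.exp ((s 0 - a) • L) * D * dysonProd L D j (fun i => s i.succ) (s 0)

namespace DysonAux

open NormedSpace Filter


variable {p : ℕ}

lemma norm_le_lnorm (X : Matrix (Fin p) (Fin p) ℂ) : ‖X‖ ≤ lnorm X := by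
  refine (Matrix.norm_le_iff (NNReal.coe_nonneg _)).2 fun i j => ?_
  have h1 : ‖X i j‖₊ ≤ ∑ k, ‖X i k‖₊ :=
    Finset.single_le_sum (f := fun k => ‖X i k‖₊) (fun _ _ => zero_le) (Finset.mem_univ j)
  have h2 : (∑ k, ‖X i k‖₊) ≤ (Finset.univ : Finset (Fin p)).sup fun i => ∑ j, ‖X i j‖₊ :=
    Finset.le_sup (f := fun i => ∑ j, ‖X i j‖₊) (Finset.mem_univ i)
  exact_mod_cast h1.trans h2

lemma hasDerivAt_of_lnorm {f : ℝ → Matrix (Fin p) (Fin p) ℂ} {m : Matrix (Fin p) (Fin p) ℂ}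
    {u : ℝ}
    (h : Tendsto (fun v => ‖v - u‖⁻¹ * lnorm (f v - f u - (v - u) • m)) (nhds u) (nhds 0)) :
    HasDerivAt f m u := by
  refine hasDerivAt_iff_tendsto.2 ?_
  refine squeeze_zero (fun v => by positivity) (fun v => ?_) h
  exact mul_le_mul_of_nonneg_left (norm_le_lnorm _) (by positivity)

lemma duhamel_core (A B : Matrix (Fin p) (Fin p) ℂ) (t u : ℝ) :
    HasDerivAt (fun v : ℝ => exp (v • A) * exp ((t - v) • B))
      (exp (u • A) * (A - B) * exp ((t - u) • B)) u :=
  hasDerivAt_of_lnorm (lin_core A B t u)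

lemma continuous_exp_smul (A : Matrix (Fin p) (Fin p) ℂ) :
    Continuous fun c : ℝ => exp (c • A) := by
  have h : ∀ u : ℝ, ContinuousAt
      (fun v : ℝ => exp (v • A) * exp ((0 - v) • (0 : Matrix (Fin p) (Fin p) ℂ))) u :=
    fun u => (duhamel_core A 0 0 u).continuousAt
  simp only [smul_zero, exp_zero, mul_one] at h
  exact continuous_iff_continuousAt.2 h

lemma duhamel (L D : Matrix (Fin p) (Fin p) ℂ) (t : ℝ) (ht : 0 ≤ t) :
    exp (t • (L + D)) = exp (t • L) +
      ∫ u in Set.Icc (0 : ℝ) t, exp (u • (L + D)) * D * exp ((t - u) • L) := by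
  have hcont : Continuous fun u : ℝ => exp (u • (L + D)) * (L + D - L) * exp ((t - u) • L) :=
    (((continuous_exp_smul (L + D)).mul continuous_const).mul
      ((continuous_exp_smul L).comp (continuous_const.sub continuous_id)))
  have key := intervalIntegral.integral_eq_sub_of_hasDerivAt
    (f := fun v : ℝ => exp (v • (L + D)) * exp ((t - v) • L))
    (f' := fun u : ℝ => exp (u • (L + D)) * (L + D - L) * exp ((t - u) • L))
    (fun u _ => duhamel_core (L + D) L t u) (hcont.intervalIntegrable 0 t)
  simp only [zero_smul, exp_zero, one_mul, sub_zero, mul_one, sub_self] at key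
  -- key : ∫ u in 0..t, ... = exp (t • (L+D)) - exp (t • L)
  have h2 : ∫ u in Set.Icc (0 : ℝ) t, exp (u • (L + D)) * D * exp ((t - u) • L)
      = exp (t • (L + D)) - exp (t • L) := by
    rw [MeasureTheory.integral_Icc_eq_integral_Ioc, ← intervalIntegral.integral_of_le ht]
    rw [← key]
    congr 1
    funext u
    congr 2
    rw [add_sub_cancel_left]
  rw [h2]
  abel

variable (L D : Matrix (Fin p) (Fin p) ℂ)

lemma continuous_dysonProd (j : ℕ) :
    Continuous fun q : (Fin j → ℝ) × ℝ => dysonProd L D j q.1 q.2 := by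
  induction j with
  | zero =>
    simp only [dysonProd]
    exact (continuous_exp_smul L).comp (continuous_const.sub continuous_snd)
  | succ j ih =>
    simp only [dysonProd]
    refine (((continuous_exp_smul L).comp
      (((continuous_apply 0).comp continuous_fst).sub continuous_snd)).mul continuous_const).mul ?_
    exact ih.comp
      ((continuous_pi fun i => (continuous_apply i.succ).comp continuous_fst).prodMk
        ((continuous_apply 0).comp continuous_fst))

noncomputable def remProd (n : ℕ) (s : Fin (n + 1) → ℝ) : Matrix (Fin p) (Fin p) ℂ :=
  NormedSpace.exp (s 0 • (L + D)) * D * dysonProd L D n (fun i => s i.succ) (s 0)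

lemma continuous_remProd (n : ℕ) : Continuous (remProd L D n) := by
  unfold remProd
  refine (((continuous_exp_smul (L + D)).comp (continuous_apply 0)).mul continuous_const).mul ?_
  exact (continuous_dysonProd L D n).comp
    ((continuous_pi fun i => continuous_apply i.succ).prodMk (continuous_apply 0))

lemma isClosed_simplex (j : ℕ) : IsClosed (orderedSimplex j) := by
  have h : orderedSimplex j =
      (⋂ (i : Fin j) (k : Fin j) (_ : i ≤ k), {s : Fin j → ℝ | s i ≤ s k}) ∩
        ⋂ i : Fin j, (fun s : Fin j → ℝ => s i) ⁻¹' Set.Icc 0 1 := by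
    ext s
    simp only [orderedSimplex, Set.mem_setOf_eq, Set.mem_inter_iff, Set.mem_iInter,
      Set.mem_preimage, Monotone]
  rw [h]
  refine IsClosed.inter ?_ (isClosed_iInter fun i => (isClosed_Icc).preimage (continuous_apply i))
  refine isClosed_iInter fun i => isClosed_iInter fun k => isClosed_iInter fun _ => ?_
  exact isClosed_le (continuous_apply i) (continuous_apply k)

lemma isCompact_simplex (j : ℕ) : IsCompact (orderedSimplex j) := by
  refine (isCompact_univ_pi fun _ : Fin j => isCompact_Icc (a := (0:ℝ)) (b := 1)).of_isClosed_subset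
    (isClosed_simplex j) ?_
  intro s hs
  exact fun i _ => hs.2 i

lemma measurableSet_simplex (j : ℕ) : MeasurableSet (orderedSimplex j) :=
  (isClosed_simplex j).measurableSet

lemma integrableOn_simplex {j : ℕ} {F : (Fin j → ℝ) → Matrix (Fin p) (Fin p) ℂ}
    (hF : Continuous F) : IntegrableOn F (orderedSimplex j) :=
  hF.continuousOn.integrableOn_compact (isCompact_simplex j)

noncomputable def mulRightCLM (C : Matrix (Fin p) (Fin p) ℂ) :
    Matrix (Fin p) (Fin p) ℂ →L[ℂ] Matrix (Fin p) (Fin p) ℂ :=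
  LinearMap.toContinuousLinearMap (LinearMap.mulRight ℂ C)

@[simp] lemma mulRightCLM_apply (C X : Matrix (Fin p) (Fin p) ℂ) :
    mulRightCLM C X = X * C := rfl

lemma I_zero : (∫ s in orderedSimplex 0, dysonProd L D 0 s 0) = NormedSpace.exp L := by
  have huniv : orderedSimplex 0 = Set.univ :=
    Set.eq_univ_of_forall fun s => ⟨fun i => i.elim0, fun i => i.elim0⟩
  have hconst : (fun s : Fin 0 → ℝ => dysonProd L D 0 s 0) = fun _ => NormedSpace.exp L := by
    funext s
    rw [dysonProd]
    norm_num
  rw [huniv, Measure.restrict_univ, hconst, integral_const]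
  have : (volume : Measure (Fin 0 → ℝ)) Set.univ = 1 := by
    rw [volume_pi, Measure.pi_univ]
    simp
  rw [Measure.real, this]
  simp

lemma K_zero : (∫ s in orderedSimplex 1, remProd L D 0 s) =
    ∫ u in Set.Icc (0 : ℝ) 1,
      NormedSpace.exp (u • (L + D)) * D * NormedSpace.exp ((1 - u) • L) := by
  have h := (volume_preserving_funUnique (Fin 1) ℝ).setIntegral_preimage_emb
    (MeasurableEquiv.funUnique (Fin 1) ℝ).measurableEmbedding
    (fun u : ℝ => NormedSpace.exp (u • (L + D)) * D * NormedSpace.exp ((1 - u) • L))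
    (Set.Icc 0 1)
  rw [← h]
  have hset : (MeasurableEquiv.funUnique (Fin 1) ℝ) ⁻¹' (Set.Icc 0 1) = orderedSimplex 1 := by
    ext s
    simp only [Set.mem_preimage, orderedSimplex, Set.mem_setOf_eq]
    constructor
    · intro hm
      refine ⟨fun i k _ => le_of_eq (congrArg s (Subsingleton.elim i k)), fun i => ?_⟩
      have : i = 0 := Subsingleton.elim i 0
      rw [this]
      exact hm
    · intro hm
      exact hm.2 0
  rw [hset]
  congr 1

lemma mem_simplex_succ_iff {n : ℕ} (s : Fin (n + 2) → ℝ) :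
    s ∈ orderedSimplex (n + 2) ↔
      (fun j : Fin (n + 1) => s j.succ) ∈ orderedSimplex (n + 1) ∧
        s 0 ∈ Set.Icc (0 : ℝ) (s (Fin.succ 0)) := by
  constructor
  · intro hs
    refine ⟨⟨fun i k hik => hs.1 (Fin.succ_le_succ_iff.2 hik), fun i => hs.2 _⟩,
      (hs.2 0).1, hs.1 (Fin.zero_le _)⟩
  · rintro ⟨⟨hm, hb⟩, h0, h01⟩
    constructor
    · refine Fin.monotone_iff_le_succ.2 fun i => ?_
      rcases i with ⟨m, hm'⟩
      match m, hm' with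
      | 0, hm' => exact h01
      | (m + 1), hm' =>
        have : ((⟨m, by omega⟩ : Fin (n + 1)) : Fin (n+1)) ≤ ⟨m + 1, by omega⟩ := by
          simp [Fin.le_def]
        have h2 := hm this
        exact h2
    · intro i
      match i with
      | ⟨0, _⟩ => exact ⟨h0, h01.trans (hb 0).2⟩
      | ⟨m + 1, hi⟩ => exact hb ⟨m, by omega⟩

lemma split (n : ℕ) (F : (Fin (n + 2) → ℝ) → Matrix (Fin p) (Fin p) ℂ) (hF : Continuous F) :
    (∫ s in orderedSimplex (n + 2), F s) =
      ∫ s in orderedSimplex (n + 1), ∫ u in Set.Icc (0 : ℝ) (s 0), F (Fin.cons u s) := by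
  set e := MeasurableEquiv.piFinSuccAbove (fun _ : Fin (n + 2) => ℝ) 0 with he
  have hmp : MeasurePreserving e volume
      ((volume : Measure ℝ).prod (volume : Measure (Fin (n + 1) → ℝ))) :=
    measurePreserving_piFinSuccAbove (fun _ : Fin (n + 2) => (volume : Measure ℝ)) 0
  set T : Set (ℝ × (Fin (n + 1) → ℝ)) :=
    {q | q.2 ∈ orderedSimplex (n + 1) ∧ q.1 ∈ Set.Icc 0 (q.2 0)} with hT
  have hsymm : ∀ q : ℝ × (Fin (n + 1) → ℝ), e.symm q = Fin.cons q.1 q.2 := by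
    intro q
    rw [he, MeasurableEquiv.piFinSuccAbove_symm_apply]
    exact Fin.insertNth_zero' q.1 q.2
  have hpre : e ⁻¹' T = orderedSimplex (n + 2) := by
    ext s
    rw [Set.mem_preimage]
    show ((fun j : Fin (n+1) => s j.succ) ∈ orderedSimplex (n + 1) ∧
      s 0 ∈ Set.Icc (0:ℝ) (s (Fin.succ 0))) ↔ _
    exact (mem_simplex_succ_iff s).symm
  have hG : Continuous fun q : ℝ × (Fin (n + 1) → ℝ) => F (Fin.cons q.1 q.2) := by
    refine hF.comp (continuous_pi fun i => ?_)
    refine Fin.cases ?_ (fun j => ?_) i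
    · exact continuous_fst
    · simpa [Function.comp_def] using (continuous_apply j).comp continuous_snd
  have hTclosed : IsClosed T := by
    have : T = (Prod.snd ⁻¹' orderedSimplex (n + 1)) ∩
        ({q : ℝ × (Fin (n + 1) → ℝ) | 0 ≤ q.1} ∩ {q | q.1 ≤ q.2 0}) := by
      ext q
      simp only [hT, Set.mem_setOf_eq, Set.mem_inter_iff, Set.mem_preimage, Set.mem_Icc]
    rw [this]
    exact ((isClosed_simplex (n + 1)).preimage continuous_snd).inter
      ((isClosed_le continuous_const continuous_fst).inter
        (isClosed_le continuous_fst ((continuous_apply 0).comp continuous_snd)))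
  have hTmeas : MeasurableSet T := hTclosed.measurableSet
  have hTcomp : IsCompact T := by
    refine ((isCompact_Icc (a := (0:ℝ)) (b := 1)).prod (isCompact_simplex (n + 1))).of_isClosed_subset
      hTclosed ?_
    rintro ⟨u, s⟩ ⟨hs, hu0, hu1⟩
    exact ⟨⟨hu0, hu1.trans (hs.2 0).2⟩, hs⟩
  have hint : Integrable (T.indicator fun q : ℝ × (Fin (n + 1) → ℝ) => F (Fin.cons q.1 q.2))
      ((volume : Measure ℝ).prod (volume : Measure (Fin (n + 1) → ℝ))) := by
    refine (integrable_indicator_iff (f := fun q : ℝ × (Fin (n + 1) → ℝ) => F (Fin.cons q.1 q.2))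
      hTmeas).2 ?_
    exact hG.continuousOn.integrableOn_compact hTcomp
  calc (∫ s in orderedSimplex (n + 2), F s)
      = ∫ x in e ⁻¹' T, (fun q => F (Fin.cons q.1 q.2)) (e x) := by
        rw [hpre]
        congr 1
        funext s
        exact congrArg F (((e.symm_apply_apply s).symm).trans (hsymm (e s)))
    _ = ∫ q in T, F (Fin.cons q.1 q.2)
        ∂((volume : Measure ℝ).prod (volume : Measure (Fin (n + 1) → ℝ))) :=
        hmp.setIntegral_preimage_emb e.measurableEmbedding (fun q => F (Fin.cons q.1 q.2)) T
    _ = ∫ q, T.indicator (fun q : ℝ × (Fin (n + 1) → ℝ) => F (Fin.cons q.1 q.2)) q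
        ∂((volume : Measure ℝ).prod (volume : Measure (Fin (n + 1) → ℝ))) :=
        (integral_indicator hTmeas).symm
    _ = ∫ s, ∫ u, T.indicator (fun q : ℝ × (Fin (n + 1) → ℝ) => F (Fin.cons q.1 q.2)) (u, s) :=
        integral_prod_symm _ hint
    _ = ∫ s, (orderedSimplex (n + 1)).indicator
          (fun s => ∫ u in Set.Icc (0:ℝ) (s 0), F (Fin.cons u s)) s := by
        congr 1
        funext s
        by_cases hs : s ∈ orderedSimplex (n + 1)
        · rw [Set.indicator_of_mem hs, ← integral_indicator measurableSet_Icc]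
          congr 1
          funext u
          by_cases hu : u ∈ Set.Icc (0:ℝ) (s 0)
          · rw [Set.indicator_of_mem hu, Set.indicator_of_mem (show (u, s) ∈ T from ⟨hs, hu⟩)]
          · rw [Set.indicator_of_notMem hu,
              Set.indicator_of_notMem (fun h => hu (h : (u,s) ∈ T).2)]
        · rw [Set.indicator_of_notMem hs]
          have hz : ∀ u : ℝ, T.indicator
              (fun q : ℝ × (Fin (n + 1) → ℝ) => F (Fin.cons q.1 q.2)) (u, s) = 0 :=
            fun u => Set.indicator_of_notMem (fun h => hs (h : (u,s) ∈ T).1) _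
          simp [hz]
    _ = ∫ s in orderedSimplex (n + 1), ∫ u in Set.Icc (0 : ℝ) (s 0), F (Fin.cons u s) :=
        integral_indicator (measurableSet_simplex (n + 1))

lemma key (n : ℕ) {s : Fin (n + 1) → ℝ} (hs : s ∈ orderedSimplex (n + 1)) :
    remProd L D n s = dysonProd L D (n + 1) s 0 +
      ∫ u in Set.Icc (0 : ℝ) (s 0), remProd L D (n + 1) (Fin.cons u s) := by
  have h0 : (0 : ℝ) ≤ s 0 := (hs.2 0).1
  set C := D * dysonProd L D n (fun i => s i.succ) (s 0) with hC
  have hfc : Continuous fun u : ℝ =>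
      NormedSpace.exp (u • (L + D)) * D * NormedSpace.exp ((s 0 - u) • L) :=
    (((continuous_exp_smul (L + D)).mul continuous_const).mul
      ((continuous_exp_smul L).comp (continuous_const.sub continuous_id)))
  have hintf : IntegrableOn
      (fun u : ℝ => NormedSpace.exp (u • (L + D)) * D * NormedSpace.exp ((s 0 - u) • L))
      (Set.Icc (0 : ℝ) (s 0)) :=
    hfc.continuousOn.integrableOn_compact isCompact_Icc
  have hCLM := (mulRightCLM C).integral_comp_comm hintf
  change (∫ u in Set.Icc (0 : ℝ) (s 0),
      NormedSpace.exp (u • (L + D)) * D * NormedSpace.exp ((s 0 - u) • L) * C) =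
    (∫ u in Set.Icc (0 : ℝ) (s 0),
      NormedSpace.exp (u • (L + D)) * D * NormedSpace.exp ((s 0 - u) • L)) * C at hCLM
  -- hCLM : ∫ u in Icc, (exp(u•(L+D)) * D * exp((s0-u)•L)) * C = (∫ u in Icc, ...) * C
  calc remProd L D n s
      = NormedSpace.exp (s 0 • (L + D)) * C := by rw [remProd, hC, mul_assoc]
    _ = (NormedSpace.exp (s 0 • L) + ∫ u in Set.Icc (0 : ℝ) (s 0),
          NormedSpace.exp (u • (L + D)) * D * NormedSpace.exp ((s 0 - u) • L)) * C := by
        rw [← duhamel L D (s 0) h0]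
    _ = NormedSpace.exp (s 0 • L) * C + (∫ u in Set.Icc (0 : ℝ) (s 0),
          NormedSpace.exp (u • (L + D)) * D * NormedSpace.exp ((s 0 - u) • L)) * C :=
        add_mul _ _ _
    _ = dysonProd L D (n + 1) s 0 +
          ∫ u in Set.Icc (0 : ℝ) (s 0), remProd L D (n + 1) (Fin.cons u s) := by
        congr 1
        · rw [dysonProd, hC, sub_zero, mul_assoc]
        · rw [← hCLM]
          congr 1
          funext u
          rw [remProd]
          simp only [Fin.cons_zero, Fin.cons_succ]
          rw [dysonProd]
          simp only [Fin.cons_zero, Fin.cons_succ, hC]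
          noncomm_ring

lemma step (n : ℕ) :
    (∫ s in orderedSimplex (n + 1), remProd L D n s) =
      (∫ s in orderedSimplex (n + 1), dysonProd L D (n + 1) s 0) +
        ∫ s in orderedSimplex (n + 2), remProd L D (n + 1) s := by
  have hcd : Continuous (fun s : Fin (n + 1) → ℝ => dysonProd L D (n + 1) s 0) := by
    have h := (continuous_dysonProd L D (n + 1)).comp
      (f := fun s : Fin (n + 1) → ℝ => (s, (0:ℝ)))
      (continuous_id.prodMk continuous_const)
    exact h
  have hdy : IntegrableOn (fun s => dysonProd L D (n + 1) s 0) (orderedSimplex (n + 1)) :=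
    integrableOn_simplex hcd
  have hrm : IntegrableOn (remProd L D n) (orderedSimplex (n + 1)) :=
    integrableOn_simplex (continuous_remProd L D n)
  have hinner : IntegrableOn
      (fun s => ∫ u in Set.Icc (0 : ℝ) (s 0), remProd L D (n + 1) (Fin.cons u s))
      (orderedSimplex (n + 1)) := by
    refine IntegrableOn.congr_fun (hrm.sub hdy) ?_ (measurableSet_simplex (n + 1))
    intro s hs
    simp only [Pi.sub_apply]
    rw [key L D n hs, add_sub_cancel_left]
  calc (∫ s in orderedSimplex (n + 1), remProd L D n s)
      = ∫ s in orderedSimplex (n + 1), (dysonProd L D (n + 1) s 0 +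
          ∫ u in Set.Icc (0 : ℝ) (s 0), remProd L D (n + 1) (Fin.cons u s)) := by
        refine setIntegral_congr_fun (measurableSet_simplex (n + 1)) ?_
        intro s hs
        exact key L D n hs
    _ = (∫ s in orderedSimplex (n + 1), dysonProd L D (n + 1) s 0) +
        ∫ s in orderedSimplex (n + 1), ∫ u in Set.Icc (0 : ℝ) (s 0),
          remProd L D (n + 1) (Fin.cons u s) := integral_add hdy hinner
    _ = (∫ s in orderedSimplex (n + 1), dysonProd L D (n + 1) s 0) +
        ∫ s in orderedSimplex (n + 2), remProd L D (n + 1) s := by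
        rw [split n (remProd L D (n + 1)) (continuous_remProd L D (n + 1))]

lemma expansion (n : ℕ) : NormedSpace.exp (L + D) =
    (∑ j ∈ Finset.range (n + 1), ∫ s in orderedSimplex j, dysonProd L D j s 0) +
      ∫ s in orderedSimplex (n + 1), remProd L D n s := by
  induction n with
  | zero =>
    rw [Finset.sum_range_one, I_zero, K_zero]
    have h := duhamel L D 1 zero_le_one
    simp only [one_smul] at h
    convert h using 3
  | succ n ih =>
    rw [Finset.sum_range_succ, ih, step, add_assoc]

end DysonAux

/-- Iterated Duhamel / Dyson expansion with remainder:
`exp(L + D) = Σ_{j=0}^{g−1} I_j + R_g`, where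
`I_j = ∫_{Δ_j} exp(s_1 L)·D·exp((s_2−s_1)L)·D ⋯ D·exp((1−s_j)L) ds` (so `I_0 = exp L`) and
`R_g = ∫_{Δ_g} exp(s_1(L+D))·D·exp((s_2−s_1)L)·D ⋯ D·exp((1−s_g)L) ds`. -/
theorem matrix_dyson_expansion (p g : ℕ) (hp : 1 ≤ p) (hg : 1 ≤ g)
    (L D : Matrix (Fin p) (Fin p) ℂ) :
    NormedSpace.exp (L + D) =
      (∑ j ∈ Finset.range g, ∫ s in orderedSimplex j, dysonProd L D j s 0) +
        ∫ s in orderedSimplex g,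
          NormedSpace.exp (s ⟨0, by omega⟩ • (L + D)) * D *
            dysonProd L D (g - 1)
              (fun i => s ⟨i.1 + 1, by have := i.isLt; omega⟩) (s ⟨0, by omega⟩) := by
  obtain ⟨n, rfl⟩ : ∃ n, g = n + 1 := ⟨g - 1, (Nat.succ_pred_eq_of_pos hg).symm⟩
  have hrem : (fun s : Fin (n + 1) → ℝ =>
      NormedSpace.exp (s ⟨0, by omega⟩ • (L + D)) * D *
        dysonProd L D (n + 1 - 1)
          (fun i => s ⟨i.1 + 1, by have := i.isLt; omega⟩) (s ⟨0, by omega⟩)) =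
      DysonAux.remProd L D n := by
    funext s
    rfl
  rw [hrem]
  exact DysonAux.expansion L D n
end

section
/- (Simplex-integral expansion) Let p ≥ 1, m ≥ 1, and A_1, …, A_m ∈ M_p(ℂ). Write S_j = A_1 + A_2 + … + A_j for 1 ≤ j ≤ m. Then the series Σ_{k_1,…,k_m ≥ 0} (1/(k_1+…+k_m+m−1)!) · S_m^{k_m} · A_m · S_{m−1}^{k_{m−1}} · A_{m−1} ⋯ S_2^{k_2} · A_2 · S_1^{k_1} converges absolutely in M_p(ℂ), and it equals the integral over the set {(s_1,…,s_{m−1}) ∈ ℝ^{m−1} : s_i ≥ 0, s_1+…+s_{m−1} ≤ 1} (with Lebesgue measure, and with s_m := 1 − s_1 − … − s_{m−1}) of exp(s_m S_m) · A_m · exp(s_{m−1} S_{m−1}) · A_{m−1} ⋯ exp(s_2 S_2) · A_2 · exp(s_1 S_1). For m = 1 this is the identity Σ_{k≥0} A_1^k/k! = exp(A_1), and for m = 2 it reduces to Duhamel's formula. -/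
open MeasureTheory

attribute [local instance] Matrix.normedAddCommGroup Matrix.normedSpace

/-- 1D beta integral for natural exponents. -/
lemma betaNat (b : ℕ) : ∀ (a : ℕ) (t : ℝ),
    ∫ x in (0:ℝ)..t, x ^ a * (t - x) ^ b =
      (a.factorial * b.factorial : ℝ) * t ^ (a + b + 1) / (a + b + 1).factorial := by
  induction b with
  | zero =>
    intro a t
    simp [integral_pow, Nat.factorial_succ]
    rw [div_eq_div_iff (by positivity) (by positivity)]
    push_cast
    ring
  | succ b ih =>
    intro a t
    have hu : ∀ x ∈ Set.uIcc (0:ℝ) t, HasDerivAt (fun x : ℝ => (t - x) ^ (b + 1))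
        (-((b+1) * (t - x) ^ b)) x := by
      intro x _
      have h1 : HasDerivAt (fun x : ℝ => t - x) (-1) x := by
        simpa using (hasDerivAt_id x).const_sub t
      have := (hasDerivAt_pow (b+1) (t - x)).comp x h1
      refine this.congr_deriv ?_
      push_cast; ring
    have hv : ∀ x ∈ Set.uIcc (0:ℝ) t, HasDerivAt (fun x : ℝ => x ^ (a + 1) / (a + 1))
        (x ^ a) x := by
      intro x _
      have := (hasDerivAt_pow (a+1) x).div_const ((a:ℝ) + 1)
      refine this.congr_deriv ?_
      have : ((a:ℝ) + 1) ≠ 0 := by positivity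
      field_simp
      simp
    have hiu : IntervalIntegrable (fun x : ℝ => -((b+1) * (t - x) ^ b)) volume 0 t :=
      (Continuous.intervalIntegrable (by continuity) _ _)
    have hiv : IntervalIntegrable (fun x : ℝ => x ^ a) volume 0 t :=
      (Continuous.intervalIntegrable (by continuity) _ _)
    have ibp := intervalIntegral.integral_mul_deriv_eq_deriv_mul hu hv hiu hiv
    have h1 : ∫ x in (0:ℝ)..t, x ^ a * (t - x) ^ (b+1)
        = ∫ x in (0:ℝ)..t, (t - x) ^ (b+1) * x ^ a := by
      congr 1; ext x; ring
    rw [h1, ibp]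
    have h2 : ∫ x in (0:ℝ)..t, -((b+1) * (t - x) ^ b) * (x ^ (a+1) / (a+1))
        = (-((b:ℝ)+1) / ((a:ℝ)+1)) * ∫ x in (0:ℝ)..t, x ^ (a+1) * (t - x) ^ b := by
      rw [← intervalIntegral.integral_const_mul]
      congr 1; ext x; ring
    rw [h2, ih (a+1) t]
    have ha : ((a:ℝ) + 1) ≠ 0 := by positivity
    have h3 : ((a:ℕ) + 1 + b + 1) = a + (b+1) + 1 := by omega
    rw [h3]
    have hf : ((a + (b+1) + 1).factorial : ℝ) ≠ 0 := by
      exact_mod_cast (Nat.factorial_pos _).ne'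
    simp only [sub_self, zero_pow (Nat.succ_ne_zero b), zero_pow (Nat.succ_ne_zero a),
      zero_mul, mul_zero, zero_div, sub_zero, zero_sub]
    push_cast [Nat.factorial_succ]
    field_simp

def simplexSet (n : ℕ) (t : ℝ) : Set (Fin n → ℝ) := {s | (∀ i, 0 ≤ s i) ∧ ∑ i, s i ≤ t}

lemma isClosed_simplexSet (n : ℕ) (t : ℝ) : IsClosed (simplexSet n t) := by
  have h1 : IsClosed {s : Fin n → ℝ | ∀ i, 0 ≤ s i} := by
    rw [Set.setOf_forall]
    exact isClosed_iInter fun i => isClosed_le continuous_const (continuous_apply i)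
  have h2 : IsClosed {s : Fin n → ℝ | ∑ i, s i ≤ t} :=
    isClosed_le (by continuity) continuous_const
  exact (Set.setOf_and ▸ h1.inter h2 :)

lemma measurableSet_simplexSet (n : ℕ) (t : ℝ) : MeasurableSet (simplexSet n t) :=
  (isClosed_simplexSet n t).measurableSet

lemma simplexSet_empty {n : ℕ} {t : ℝ} (ht : t < 0) : simplexSet n t = ∅ := by
  ext s
  simp only [simplexSet, Set.mem_setOf_eq, Set.mem_empty_iff_false, iff_false, not_and]
  intro h hs
  exact absurd (le_trans (Finset.sum_nonneg fun i _ => h i) hs) (not_le.2 ht)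

lemma isCompact_simplexSet (n : ℕ) (t : ℝ) : IsCompact (simplexSet n t) := by
  refine Metric.isCompact_of_isClosed_isBounded (isClosed_simplexSet n t) ?_
  refine (Metric.isBounded_closedBall (x := (0 : Fin n → ℝ)) (r := |t|)).subset ?_
  intro s hs
  simp only [Metric.mem_closedBall, dist_zero_right]
  refine pi_norm_le_iff_of_nonneg (abs_nonneg t) |>.2 fun i => ?_
  rw [Real.norm_eq_abs, abs_le]
  constructor
  · linarith [hs.1 i, abs_nonneg t]
  · calc s i ≤ ∑ j, s j := Finset.single_le_sum (fun j _ => hs.1 j) (Finset.mem_univ i)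
      _ ≤ t := hs.2
      _ ≤ |t| := le_abs_self t

lemma dirichlet (n : ℕ) : ∀ (k : Fin n → ℕ) (e : ℕ) (t : ℝ), 0 ≤ t →
    ∫ s in simplexSet n t, (∏ i, s i ^ k i) * (t - ∑ i, s i) ^ e =
      (∏ i, ((k i).factorial : ℝ)) * e.factorial * t ^ (∑ i, k i + e + n) /
        ((∑ i, k i + e + n).factorial) := by
  induction n with
  | zero =>
    intro k e t ht
    have huniv : simplexSet 0 t = Set.univ := by
      ext s
      simp [simplexSet, ht]
    rw [huniv]
    have : (fun s : Fin 0 → ℝ => (∏ i, s i ^ k i) * (t - ∑ i, s i) ^ e)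
        = fun _ => t ^ e := by
      funext s
      simp
    rw [this]
    rw [setIntegral_const]
    simp [MeasureTheory.volume_pi, MeasureTheory.Measure.pi_empty_univ, Measure.real]
    have : ((e.factorial : ℝ)) ≠ 0 := by exact_mod_cast (Nat.factorial_pos e).ne'
    field_simp
  | succ n ih =>
    intro k e t ht
    set M : ℕ := ∑ i : Fin n, k i.succ + e + n with hM
    set C : ℝ := (∏ i : Fin n, ((k i.succ).factorial : ℝ)) * e.factorial / M.factorial with hC
    -- the function on the split space
    set G : ℝ × (Fin n → ℝ) → ℝ := fun z =>
      Set.indicator (Set.Ici (0:ℝ)) (fun x => x ^ k 0) z.1 *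
      Set.indicator (simplexSet n (t - z.1))
        (fun y => (∏ i, y i ^ k i.succ) * ((t - z.1) - ∑ i, y i) ^ e) z.2 with hG
    set F : (Fin (n+1) → ℝ) → ℝ :=
      Set.indicator (simplexSet (n+1) t)
        (fun s => (∏ i, s i ^ k i) * (t - ∑ i, s i) ^ e) with hF
    have hmem : ∀ s : Fin (n+1) → ℝ, s ∈ simplexSet (n+1) t ↔
        (s 0 ∈ Set.Ici (0:ℝ) ∧ (fun j : Fin n => s j.succ) ∈ simplexSet n (t - s 0)) := by
      intro s
      simp only [simplexSet, Set.mem_setOf_eq, Set.mem_Ici, Fin.forall_fin_succ,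
        Fin.sum_univ_succ]
      constructor
      · rintro ⟨⟨h0, hs⟩, hsum⟩
        exact ⟨h0, hs, by linarith⟩
      · rintro ⟨h0, hs, hsum⟩
        exact ⟨⟨h0, hs⟩, by linarith⟩
    have key : ∀ s : Fin (n+1) → ℝ,
        F s = G (MeasurableEquiv.piFinSuccAbove (fun _ => ℝ) 0 s) := by
      intro s
      have happ : (MeasurableEquiv.piFinSuccAbove (fun _ : Fin (n+1) => ℝ) 0 s)
          = (s 0, fun j : Fin n => s j.succ) := by
        simp [MeasurableEquiv.piFinSuccAbove, Fin.insertNthEquiv, Fin.removeNth,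
          Fin.succAbove_zero]
        rfl
      rw [happ, hG, hF]
      dsimp only
      by_cases h : s ∈ simplexSet (n+1) t
      · rw [Set.indicator_of_mem h]
        obtain ⟨h1, h2⟩ := (hmem s).1 h
        rw [Set.indicator_of_mem h1, Set.indicator_of_mem h2]
        simp only [Fin.prod_univ_succ, Fin.sum_univ_succ]
        ring
      · rw [Set.indicator_of_notMem h]
        rcases not_and_or.1 ((hmem s).not.1 h) with h1 | h2
        · rw [Set.indicator_of_notMem h1, zero_mul]
        · rw [Set.indicator_of_notMem h2, mul_zero]
    have hFint : Integrable F := by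
      rw [hF, integrable_indicator_iff (measurableSet_simplexSet _ _)]
      exact ContinuousOn.integrableOn_compact (isCompact_simplexSet _ _)
        (Continuous.continuousOn (by fun_prop))
    have hmp := measurePreserving_piFinSuccAbove (fun _ : Fin (n+1) => (volume : Measure ℝ)) 0
    rw [← MeasureTheory.volume_pi, ← MeasureTheory.volume_pi] at hmp
    have hGint : Integrable G ((volume : Measure ℝ).prod (volume : Measure (Fin n → ℝ))) := by
      rw [← hmp.integrable_comp_emb (MeasurableEquiv.measurableEmbedding _)]
      have : (G ∘ (MeasurableEquiv.piFinSuccAbove (fun _ : Fin (n+1) => ℝ) 0)) = F := by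
        funext s; exact (key s).symm
      rw [this]
      exact hFint
    have step1 : ∫ s in simplexSet (n+1) t, (∏ i, s i ^ k i) * (t - ∑ i, s i) ^ e
        = ∫ z, G z ∂((volume : Measure ℝ).prod (volume : Measure (Fin n → ℝ))) := by
      rw [← integral_indicator (measurableSet_simplexSet _ _), ← hF]
      rw [show F = G ∘ (MeasurableEquiv.piFinSuccAbove (fun _ : Fin (n+1) => ℝ) 0) from
        funext key]
      exact hmp.integral_comp (MeasurableEquiv.measurableEmbedding _) G
    have step2 : ∫ z, G z ∂((volume : Measure ℝ).prod (volume : Measure (Fin n → ℝ)))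
        = ∫ x : ℝ, ∫ y : Fin n → ℝ, G (x, y) := integral_prod G hGint
    have inner : ∀ x : ℝ, (∫ y : Fin n → ℝ, G (x, y))
        = Set.indicator (Set.Icc (0:ℝ) t) (fun x => x ^ k 0 * (C * (t - x) ^ M)) x := by
      intro x
      by_cases hx0 : 0 ≤ x
      · by_cases hxt : x ≤ t
        · have h1 : ∫ y : Fin n → ℝ, G (x, y)
              = x ^ k 0 * ∫ y in simplexSet n (t - x),
                  (∏ i, y i ^ k i.succ) * ((t - x) - ∑ i, y i) ^ e := by
            rw [hG]
            simp only
            rw [Set.indicator_of_mem (Set.mem_Ici.2 hx0)]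
            rw [MeasureTheory.integral_const_mul]
            rw [integral_indicator (measurableSet_simplexSet _ _)]
          rw [h1, ih (fun i => k i.succ) e (t - x) (by linarith)]
          rw [Set.indicator_of_mem (Set.mem_Icc.2 ⟨hx0, hxt⟩)]
          rw [hC, hM]
          ring
        · have hempty : simplexSet n (t - x) = ∅ := simplexSet_empty (by linarith)
          have h1 : ∫ y : Fin n → ℝ, G (x, y) = 0 := by
            rw [hG]
            simp only [hempty, Set.indicator_empty]
            simp
          rw [h1, Set.indicator_of_notMem (by simp [Set.mem_Icc]; intro; linarith)]
      · have h1 : ∫ y : Fin n → ℝ, G (x, y) = 0 := by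
          rw [hG]
          simp only [Set.indicator_of_notMem (by simpa using hx0 : x ∉ Set.Ici (0:ℝ)), zero_mul]
          simp
        rw [h1, Set.indicator_of_notMem (by simp [Set.mem_Icc]; intro h; linarith)]
    have step3 : ∫ x : ℝ, ∫ y : Fin n → ℝ, G (x, y)
        = C * ∫ x in (0:ℝ)..t, x ^ k 0 * (t - x) ^ M := by
      rw [show (fun x : ℝ => ∫ y : Fin n → ℝ, G (x, y))
          = Set.indicator (Set.Icc (0:ℝ) t) (fun x => x ^ k 0 * (C * (t - x) ^ M))
          from funext inner]
      rw [integral_indicator measurableSet_Icc]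
      rw [integral_Icc_eq_integral_Ioc, ← intervalIntegral.integral_of_le ht,
        ← intervalIntegral.integral_const_mul]
      congr 1
      funext x
      ring
    rw [step1, step2, step3, betaNat M (k 0) t]
    -- final algebra
    have hsum : ∑ i : Fin (n+1), k i = k 0 + ∑ i : Fin n, k i.succ := Fin.sum_univ_succ k
    have hexp : k 0 + M + 1 = ∑ i : Fin (n+1), k i + e + (n+1) := by
      rw [hsum, hM]; omega
    have hfac1 : ((M.factorial : ℝ)) ≠ 0 := by exact_mod_cast (Nat.factorial_pos M).ne'
    have hfac2 : (((k 0 + M + 1).factorial : ℝ)) ≠ 0 := by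
      exact_mod_cast (Nat.factorial_pos _).ne'
    rw [hC, Fin.prod_univ_succ, ← hexp]
    field_simp

/-- Descending product `S_j^{k_j} · A_j · S_{j−1}^{k_{j−1}} · A_{j−1} ⋯ S_1^{k_1} · A_1 · S_0^{k_0}`
(0-based indexing). -/
noncomputable def descPowProd {p : ℕ} (S A : ℕ → Matrix (Fin p) (Fin p) ℂ) (k : ℕ → ℕ) :
    ℕ → Matrix (Fin p) (Fin p) ℂ
  | 0 => S 0 ^ k 0
  | j + 1 => S (j + 1) ^ k (j + 1) * A (j + 1) * descPowProd S A k j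

/-- Descending product of exponentials
`exp(s_j S_j) · A_j · exp(s_{j−1} S_{j−1}) · A_{j−1} ⋯ exp(s_1 S_1) · A_1 · exp(s_0 S_0)`
(0-based indexing). -/
noncomputable def descExpProd {p : ℕ} (S A : ℕ → Matrix (Fin p) (Fin p) ℂ) (s : ℕ → ℝ) :
    ℕ → Matrix (Fin p) (Fin p) ℂ
  | 0 => NormedSpace.exp (s 0 • S 0)
  | j + 1 => NormedSpace.exp (s (j + 1) • S (j + 1)) * A (j + 1) * descExpProd S A s j

section MatrixPart

variable {p : ℕ}

lemma mat_norm_mul_le (x y : Matrix (Fin p) (Fin p) ℂ) : ‖x * y‖ ≤ p * ‖x‖ * ‖y‖ := by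
  rcases Nat.eq_zero_or_pos p with hp | hp
  · subst hp
    rw [Subsingleton.elim (x * y) 0, norm_zero]
    positivity
  · rw [Matrix.norm_le_iff (by positivity)]
    intro i j
    rw [Matrix.mul_apply]
    calc ‖∑ l, x i l * y l j‖ ≤ ∑ l, ‖x i l * y l j‖ := norm_sum_le _ _
      _ ≤ ∑ _l : Fin p, ‖x‖ * ‖y‖ := by
          refine Finset.sum_le_sum fun l _ => ?_
          rw [norm_mul]
          exact mul_le_mul (Matrix.norm_entry_le_entrywise_sup_norm x)
            (Matrix.norm_entry_le_entrywise_sup_norm y) (norm_nonneg _) (norm_nonneg _)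
      _ = p * ‖x‖ * ‖y‖ := by
          rw [Finset.sum_const, Finset.card_univ, Fintype.card_fin, nsmul_eq_mul]
          ring

lemma mat_norm_pow_le (x : Matrix (Fin p) (Fin p) ℂ) :
    ∀ k : ℕ, ‖x ^ k‖ ≤ ((p : ℝ) * ‖x‖ + 1) ^ k
  | 0 => by
    rw [pow_zero, pow_zero]
    refine (Matrix.norm_le_iff zero_le_one).2 fun i j => ?_
    rw [Matrix.one_apply]
    split_ifs <;> simp
  | k + 1 => by
    rw [pow_succ]
    calc ‖x ^ k * x‖ ≤ p * ‖x ^ k‖ * ‖x‖ := mat_norm_mul_le _ _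
      _ ≤ ((p : ℝ) * ‖x‖ + 1) ^ k * ((p:ℝ) * ‖x‖) := by
          have h := mat_norm_pow_le x k
          have h2 := mul_le_mul_of_nonneg_right h (mul_nonneg (Nat.cast_nonneg (α := ℝ) p) (norm_nonneg x))
          nlinarith
      _ ≤ ((p : ℝ) * ‖x‖ + 1) ^ k * ((p:ℝ) * ‖x‖ + 1) := by
          have : (0:ℝ) ≤ ((p : ℝ) * ‖x‖ + 1) ^ k := by positivity
          nlinarith
      _ = ((p : ℝ) * ‖x‖ + 1) ^ (k + 1) := by rw [pow_succ]

lemma mat_exp_summable_norm (x : Matrix (Fin p) (Fin p) ℂ) :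
    Summable (fun j : ℕ => ‖(((j.factorial : ℝ))⁻¹) • x ^ j‖) := by
  refine Summable.of_nonneg_of_le (fun j => norm_nonneg _) (fun j => ?_)
    (Real.summable_pow_div_factorial ((p:ℝ) * ‖x‖ + 1))
  rw [norm_smul, Real.norm_eq_abs, abs_of_nonneg (by positivity)]
  calc ((j.factorial : ℝ))⁻¹ * ‖x ^ j‖ ≤ ((j.factorial : ℝ))⁻¹ * ((p:ℝ) * ‖x‖ + 1) ^ j := by
        exact mul_le_mul_of_nonneg_left (mat_norm_pow_le x j) (by positivity)
    _ = ((p:ℝ) * ‖x‖ + 1) ^ j / (j.factorial : ℝ) := by rw [div_eq_mul_inv, mul_comm]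

lemma mat_exp_hasSum (x : Matrix (Fin p) (Fin p) ℂ) :
    HasSum (fun j : ℕ => (((j.factorial : ℝ))⁻¹) • x ^ j) (NormedSpace.exp x) := by
  have hsum : Summable (fun j : ℕ => (((j.factorial : ℝ))⁻¹) • x ^ j) :=
    (mat_exp_summable_norm x).of_norm
  have h3 : NormedSpace.exp x = ∑' j : ℕ, (((j.factorial : ℝ))⁻¹) • x ^ j := by
    rw [NormedSpace.exp_eq_tsum ℂ]
    refine tsum_congr fun j => ?_
    rw [show ((j.factorial : ℂ))⁻¹ = ((((j.factorial : ℝ))⁻¹ : ℝ) : ℂ) by push_cast; ring]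
    rw [← Complex.coe_algebraMap, algebraMap_smul]
  exact h3 ▸ hsum.hasSum

lemma descPowProd_congr (S A : ℕ → Matrix (Fin p) (Fin p) ℂ) {k k' : ℕ → ℕ} :
    ∀ n : ℕ, (∀ j, j ≤ n → k j = k' j) → descPowProd S A k n = descPowProd S A k' n
  | 0, h => by simp [descPowProd, h 0 le_rfl]
  | n+1, h => by
    simp only [descPowProd, h (n+1) le_rfl,
      descPowProd_congr S A n (fun j hj => h j (le_trans hj (Nat.le_succ n)))]

lemma descPowProd_norm_le (S A : ℕ → Matrix (Fin p) (Fin p) ℂ) :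
    ∀ (n : ℕ) (k : ℕ → ℕ), ‖descPowProd S A k n‖ ≤
      (∏ j ∈ Finset.range (n+1), ((p:ℝ) * ‖S j‖ + 1) ^ k j) *
        ∏ j ∈ Finset.range n, ((p:ℝ)^2 * ‖A (j+1)‖)
  | 0, k => by
    simp only [descPowProd, zero_add, Finset.prod_range_one, Finset.range_zero,
      Finset.prod_empty, mul_one]
    exact mat_norm_pow_le (S 0) (k 0)
  | n+1, k => by
    have h1 := mat_norm_mul_le (S (n+1) ^ k (n+1) * A (n+1)) (descPowProd S A k n)
    have h2 := mat_norm_mul_le (S (n+1) ^ k (n+1)) (A (n+1))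
    have h3 := mat_norm_pow_le (S (n+1)) (k (n+1))
    have hIH := descPowProd_norm_le S A n k
    have hp0 : (0:ℝ) ≤ p := Nat.cast_nonneg p
    calc ‖descPowProd S A k (n+1)‖
        = ‖S (n+1) ^ k (n+1) * A (n+1) * descPowProd S A k n‖ := by rw [descPowProd]
      _ ≤ p * ‖S (n+1) ^ k (n+1) * A (n+1)‖ * ‖descPowProd S A k n‖ := h1
      _ ≤ p * ((p:ℝ) * ‖S (n+1) ^ k (n+1)‖ * ‖A (n+1)‖) * ‖descPowProd S A k n‖ := by
          gcongr
      _ ≤ p * ((p:ℝ) * ((p:ℝ) * ‖S (n+1)‖ + 1) ^ k (n+1) * ‖A (n+1)‖) *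
            ((∏ j ∈ Finset.range (n+1), ((p:ℝ) * ‖S j‖ + 1) ^ k j) *
              ∏ j ∈ Finset.range n, ((p:ℝ)^2 * ‖A (j+1)‖)) := by
          gcongr
      _ = (∏ j ∈ Finset.range (n+2), ((p:ℝ) * ‖S j‖ + 1) ^ k j) *
            ∏ j ∈ Finset.range (n+1), ((p:ℝ)^2 * ‖A (j+1)‖) := by
          rw [Finset.prod_range_succ ((fun j => ((p:ℝ) * ‖S j‖ + 1) ^ k j)) (n+1),
            Finset.prod_range_succ (fun j => ((p:ℝ)^2 * ‖A (j+1)‖)) n]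
          ring

end MatrixPart

lemma summable_pi_prod {g : ℕ → ℝ} (hg : Summable g) (hg0 : ∀ i, 0 ≤ g i) :
    ∀ n : ℕ, Summable (fun k : Fin n → ℕ => ∏ j, g (k j))
  | 0 => by
    have : (fun k : Fin 0 → ℕ => ∏ j, g (k j)) = fun _ => 1 := by
      funext k; simp
    rw [this]
    exact .of_finite
  | n+1 => by
    have h2 := hg.mul_of_nonneg (summable_pi_prod hg hg0 n) hg0
      (fun k => Finset.prod_nonneg fun j _ => hg0 _)
    refine ((Fin.consEquiv (fun _ : Fin (n+1) => ℕ)).summable_iff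
      (f := fun k : Fin (n+1) → ℕ => ∏ j, g (k j))).1 ?_
    refine h2.congr fun z => ?_
    simp [Fin.consEquiv, Fin.prod_univ_succ]

section Expansion

attribute [local instance] Matrix.normedAddCommGroup Matrix.normedSpace

variable {p : ℕ}

lemma expansion (S A : ℕ → Matrix (Fin p) (Fin p) ℂ) :
    ∀ (n : ℕ) (s : ℕ → ℝ),
    Summable (fun k : Fin (n+1) → ℕ =>
      ‖(∏ j : Fin (n+1), ((s (j:ℕ)) ^ k j / (k j).factorial : ℝ)) •
        descPowProd S A (fun j => if h : j < n+1 then k ⟨j, h⟩ else 0) n‖) ∧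
    HasSum (fun k : Fin (n+1) → ℕ =>
      (∏ j : Fin (n+1), ((s (j:ℕ)) ^ k j / (k j).factorial : ℝ)) •
        descPowProd S A (fun j => if h : j < n+1 then k ⟨j, h⟩ else 0) n)
      (descExpProd S A s n) := by
  intro n
  induction n with
  | zero =>
    intro s
    set f : (Fin 1 → ℕ) → Matrix (Fin p) (Fin p) ℂ := fun k =>
      (∏ j : Fin 1, ((s (j:ℕ)) ^ k j / (k j).factorial : ℝ)) •
        descPowProd S A (fun j => if h : j < 1 then k ⟨j, h⟩ else 0) 0 with hf
    have hcomp : ∀ j : ℕ, f ((Equiv.funUnique (Fin 1) ℕ).symm j)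
        = ((j.factorial : ℝ))⁻¹ • (s 0 • S 0) ^ j := by
      intro j
      rw [hf]
      simp only [Equiv.funUnique_symm_apply, descPowProd]
      rw [Fin.prod_univ_one]
      simp only [Function.const_apply, Fin.val_eq_zero, Fin.isValue]
      rw [smul_pow]
      rw [smul_smul]
      congr 1
      rw [div_eq_mul_inv, mul_comm]
      rfl
    constructor
    · refine ((Equiv.funUnique (Fin 1) ℕ).symm.summable_iff (f := fun k => ‖f k‖)).1 ?_
      refine (mat_exp_summable_norm (s 0 • S 0)).congr fun j => ?_
      rw [Function.comp_apply, hcomp j]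
    · refine ((Equiv.funUnique (Fin 1) ℕ).symm.hasSum_iff (f := f)).1 ?_
      have h1 : (f ∘ (Equiv.funUnique (Fin 1) ℕ).symm)
          = fun j => ((j.factorial:ℝ))⁻¹ • (s 0 • S 0)^j := funext hcomp
      rw [h1]
      exact mat_exp_hasSum (s 0 • S 0)
  | succ n ih =>
    intro s
    obtain ⟨ihS, ihH⟩ := ih s
    set g : (Fin (n+1) → ℕ) → Matrix (Fin p) (Fin p) ℂ := fun k =>
      (∏ j : Fin (n+1), ((s (j:ℕ)) ^ k j / (k j).factorial : ℝ)) •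
        descPowProd S A (fun j => if h : j < n+1 then k ⟨j, h⟩ else 0) n with hg
    set E := descExpProd S A s n with hE
    set a : ℕ → ℝ := fun j => s (n+1) ^ j / j.factorial with ha
    set F : ℕ × (Fin (n+1) → ℕ) → Matrix (Fin p) (Fin p) ℂ := fun z =>
      a z.1 • ((S (n+1) ^ z.1 * A (n+1)) * g z.2) with hF
    have hu : Summable (fun j : ℕ =>
        |s (n+1)| ^ j * ((p:ℝ) * ‖S (n+1)‖ + 1) ^ j / j.factorial) := by
      refine (Real.summable_pow_div_factorial
        (|s (n+1)| * ((p:ℝ) * ‖S (n+1)‖ + 1))).congr fun j => ?_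
      rw [mul_pow]
    have hbound : ∀ z : ℕ × (Fin (n+1) → ℕ), ‖F z‖ ≤
        ((p:ℝ)^2 * ‖A (n+1)‖) *
          ((|s (n+1)| ^ z.1 * ((p:ℝ) * ‖S (n+1)‖ + 1) ^ z.1 / z.1.factorial) * ‖g z.2‖) := by
      rintro ⟨j, k⟩
      have e1 : |a j| = |s (n+1)| ^ j / (j.factorial : ℝ) := by
        rw [ha]; simp only; rw [abs_div, abs_pow, Nat.abs_cast]
      calc ‖F (j,k)‖ = |a j| * ‖S (n+1) ^ j * A (n+1) * g k‖ := by
            rw [hF]; simp only; rw [norm_smul, Real.norm_eq_abs]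
        _ ≤ |a j| * ((p:ℝ) * ‖S (n+1) ^ j * A (n+1)‖ * ‖g k‖) :=
            mul_le_mul_of_nonneg_left (mat_norm_mul_le _ _) (abs_nonneg _)
        _ ≤ |a j| * ((p:ℝ) * ((p:ℝ) * ‖S (n+1) ^ j‖ * ‖A (n+1)‖) * ‖g k‖) := by
            gcongr
            exact mat_norm_mul_le _ _
        _ ≤ |a j| * ((p:ℝ) * ((p:ℝ) * (((p:ℝ) * ‖S (n+1)‖ + 1) ^ j) * ‖A (n+1)‖) * ‖g k‖) := by
            gcongr
            exact mat_norm_pow_le _ _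
        _ = _ := by rw [e1]; ring
    have hnormF : Summable (fun z : ℕ × (Fin (n+1) → ℕ) => ‖F z‖) := by
      refine Summable.of_nonneg_of_le (fun z => norm_nonneg _) hbound ?_
      exact (hu.mul_of_nonneg ihS (fun j => by positivity) (fun k => norm_nonneg _)).mul_left _
    have htot : HasSum F (∑' z, F z) := hnormF.of_norm.hasSum
    have hfib : ∀ j : ℕ, HasSum (fun k => F (j, k))
        (a j • ((S (n+1) ^ j * A (n+1)) * E)) := by
      intro j
      have hcont : Continuous (fun Y : Matrix (Fin p) (Fin p) ℂ =>
          (S (n+1) ^ j * A (n+1)) * Y) := continuous_const.matrix_mul continuous_id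
      have h1 := (ihH.map (AddMonoidHom.mulLeft (S (n+1) ^ j * A (n+1))) hcont).const_smul (a j)
      have h2 : (fun k => F (j, k)) =
          fun k => a j • ((AddMonoidHom.mulLeft (S (n+1) ^ j * A (n+1))) (g k)) := by
        funext k
        rw [hF]
        simp [AddMonoidHom.coe_mulLeft]
      rw [h2]
      simpa using h1
    have hexp := mat_exp_hasSum (s (n+1) • S (n+1))
    have hcont2 : Continuous (fun Y : Matrix (Fin p) (Fin p) ℂ => Y * (A (n+1) * E)) :=
      continuous_id.matrix_mul continuous_const
    have h3 := hexp.map (AddMonoidHom.mulRight (A (n+1) * E)) hcont2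
    have h4 : HasSum (fun j => a j • ((S (n+1) ^ j * A (n+1)) * E))
        (NormedSpace.exp (s (n+1) • S (n+1)) * A (n+1) * E) := by
      have hfun : (⇑(AddMonoidHom.mulRight (A (n+1) * E)) ∘
          fun j : ℕ => ((j.factorial:ℝ))⁻¹ • (s (n+1) • S (n+1)) ^ j)
          = fun j : ℕ => a j • ((S (n+1) ^ j * A (n+1)) * E) := by
        funext j
        simp only [Function.comp_apply, AddMonoidHom.coe_mulRight]
        rw [smul_pow, smul_smul, smul_mul_assoc, mul_assoc]
        congr 1
        rw [ha]; simp only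
        rw [div_eq_mul_inv, mul_comm]
      rw [hfun] at h3
      rw [mul_assoc]
      exact h3
    have hvalue : (∑' z, F z) = NormedSpace.exp (s (n+1) • S (n+1)) * A (n+1) * E :=
      (htot.prod_fiberwise hfib).unique h4
    have htot2 : HasSum F (NormedSpace.exp (s (n+1) • S (n+1)) * A (n+1) * E) :=
      hvalue ▸ htot
    set e' := Fin.insertNthEquiv (fun _ : Fin (n+2) => ℕ) (Fin.last (n+1)) with he'
    have hesymm : ∀ k : Fin (n+2) → ℕ,
        e'.symm k = (k (Fin.last (n+1)), fun i : Fin (n+1) => k i.castSucc) := by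
      intro k
      rw [he']
      simp only [Fin.insertNthEquiv_symm_apply]
      congr 1
      funext i
      simp [Fin.removeNth, Fin.succAbove_last]
    have hGF : ∀ k : Fin (n+2) → ℕ,
        ((∏ j : Fin (n+2), ((s (j:ℕ)) ^ k j / (k j).factorial : ℝ)) •
          descPowProd S A (fun j => if h : j < n+2 then k ⟨j, h⟩ else 0) (n+1))
        = F (e'.symm k) := by
      intro k
      rw [hesymm k]
      have hcoef : (∏ j : Fin (n+2), ((s (j:ℕ)) ^ k j / (k j).factorial : ℝ))
          = (∏ i : Fin (n+1), ((s (i:ℕ)) ^ k i.castSucc / (k i.castSucc).factorial : ℝ)) *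
            (s (n+1) ^ k (Fin.last (n+1)) / (k (Fin.last (n+1))).factorial) := by
        rw [Fin.prod_univ_castSucc]
        simp [Fin.coe_castSucc, Fin.val_last]
      have hD : descPowProd S A (fun j => if h : j < n+2 then k ⟨j, h⟩ else 0) (n+1)
          = S (n+1) ^ (k (Fin.last (n+1))) * A (n+1) *
            descPowProd S A
              (fun j => if h : j < n+1 then (fun i : Fin (n+1) => k i.castSucc) ⟨j, h⟩ else 0) n := by
        simp only [descPowProd]
        have hexp1 : (if h : n+1 < n+2 then k ⟨n+1, h⟩ else 0) = k (Fin.last (n+1)) := by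
          rw [dif_pos (by omega)]
          rfl
        rw [hexp1]
        congr 1
        refine descPowProd_congr S A n fun j hj => ?_
        rw [dif_pos (by omega : j < n+2), dif_pos (by omega : j < n+1)]
        rfl
      rw [hcoef, hD, hF]
      simp only
      rw [hg]
      simp only
      rw [mul_smul_comm, smul_smul]
      congr 1
      rw [ha]
      simp only
      ring
    refine ⟨?_, ?_⟩
    · refine (e'.summable_iff).1 ?_
      refine hnormF.congr fun z => ?_
      rw [Function.comp_apply, hGF (e' z), Equiv.symm_apply_apply]
    · refine (e'.hasSum_iff).1 ?_
      have hcompeq : ((fun k : Fin (n+2) → ℕ =>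
          (∏ j : Fin (n+2), ((s (j:ℕ)) ^ k j / (k j).factorial : ℝ)) •
            descPowProd S A (fun j => if h : j < n+2 then k ⟨j, h⟩ else 0) (n+1)) ∘ e') = F := by
        funext z
        rw [Function.comp_apply, hGF (e' z), Equiv.symm_apply_apply]
      rw [hcompeq]
      exact htot2

end Expansion

section Final

attribute [local instance] Matrix.normedAddCommGroup Matrix.normedSpace

variable {p : ℕ}

lemma final_version (p n : ℕ) (S A : ℕ → Matrix (Fin p) (Fin p) ℂ) :
    Summable (fun k : Fin (n+1) → ℕ =>
      ‖((Nat.factorial ((∑ j, k j) + n) : ℝ))⁻¹ •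
        descPowProd S A (fun j => if h : j < n+1 then k ⟨j, h⟩ else 0) n‖) ∧
    HasSum (fun k : Fin (n+1) → ℕ =>
      ((Nat.factorial ((∑ j, k j) + n) : ℝ))⁻¹ •
        descPowProd S A (fun j => if h : j < n+1 then k ⟨j, h⟩ else 0) n)
      (∫ σ in simplexSet n 1, descExpProd S A
        (fun j => if h : j < n then σ ⟨j, h⟩ else 1 - ∑ i, σ i) n) := by
  set s' : (Fin n → ℝ) → ℕ → ℝ :=
    fun σ j => if h : j < n then σ ⟨j, h⟩ else 1 - ∑ i, σ i with hs'
  set K : (Fin (n+1) → ℕ) → ℕ → ℕ := fun k j => if h : j < n+1 then k ⟨j, h⟩ else 0 with hK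
  set M : (Fin (n+1) → ℕ) → Matrix (Fin p) (Fin p) ℂ := fun k => descPowProd S A (K k) n
    with hM
  set c : (Fin (n+1) → ℕ) → (Fin n → ℝ) → ℝ := fun k σ =>
    ∏ j : Fin (n+1), ((s' σ (j:ℕ)) ^ k j / ((k j).factorial : ℝ)) with hc
  have hexp : ∀ σ : Fin n → ℝ, HasSum (fun k : Fin (n+1) → ℕ => c k σ • M k)
      (descExpProd S A (s' σ) n) := fun σ => (expansion S A n (s' σ)).2
  -- coefficient rewriting
  have hs'cast : ∀ (σ : Fin n → ℝ) (i : Fin n), s' σ ((i.castSucc : Fin (n+1)) : ℕ) = σ i := by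
    intro σ i
    show (if h : (i:ℕ) < n then σ ⟨(i:ℕ), h⟩ else 1 - ∑ i, σ i) = σ i
    rw [dif_pos i.isLt]
  have hs'last : ∀ σ : Fin n → ℝ, s' σ ((Fin.last n : Fin (n+1)) : ℕ) = 1 - ∑ i, σ i := by
    intro σ
    show (if h : n < n then σ ⟨n, h⟩ else 1 - ∑ i, σ i) = 1 - ∑ i, σ i
    rw [dif_neg (lt_irrefl n)]
  have hcoef : ∀ (k : Fin (n+1) → ℕ) (σ : Fin n → ℝ), c k σ
      = (∏ j : Fin (n+1), (((k j).factorial : ℝ))⁻¹) *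
        ((∏ i : Fin n, σ i ^ k i.castSucc) * (1 - ∑ i, σ i) ^ k (Fin.last n)) := by
    intro k σ
    rw [hc]
    simp only [div_eq_mul_inv]
    rw [Finset.prod_mul_distrib]
    rw [Fin.prod_univ_castSucc (f := fun j : Fin (n+1) => (s' σ (j:ℕ)) ^ k j)]
    rw [Finset.prod_congr rfl (fun i _ => by rw [hs'cast σ i]), hs'last σ]
    ring
  have hcnonneg : ∀ (k : Fin (n+1) → ℕ) (σ : Fin n → ℝ), σ ∈ simplexSet n 1 → 0 ≤ c k σ := by
    intro k σ hσ
    rw [hcoef]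
    have h1 : (0:ℝ) ≤ ∏ i : Fin n, σ i ^ k i.castSucc :=
      Finset.prod_nonneg fun i _ => pow_nonneg (hσ.1 i) _
    have h2 : (0:ℝ) ≤ (1 - ∑ i, σ i) ^ k (Fin.last n) := pow_nonneg (by linarith [hσ.2]) _
    positivity
  have hfacne : ∀ x : ℕ, ((x.factorial : ℝ)) ≠ 0 :=
    fun x => by exact_mod_cast (Nat.factorial_pos x).ne'
  have hcint : ∀ k : Fin (n+1) → ℕ,
      ∫ σ in simplexSet n 1, c k σ = ((((∑ j, k j) + n).factorial : ℝ))⁻¹ := by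
    intro k
    rw [show (fun σ : Fin n → ℝ => c k σ) = fun σ =>
        (∏ j : Fin (n+1), (((k j).factorial : ℝ))⁻¹) *
          ((∏ i : Fin n, σ i ^ k i.castSucc) * (1 - ∑ i, σ i) ^ k (Fin.last n))
      from funext fun σ => hcoef k σ]
    rw [MeasureTheory.integral_const_mul]
    have hd := dirichlet n (fun i => k i.castSucc) (k (Fin.last n)) 1 zero_le_one
    rw [hd, one_pow]
    have h1 : ∑ i : Fin n, k i.castSucc + k (Fin.last n) + n = ∑ j : Fin (n+1), k j + n := by
      rw [Fin.sum_univ_castSucc]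
    rw [h1]
    rw [Fin.prod_univ_castSucc (f := fun j : Fin (n+1) => (((k j).factorial : ℝ))⁻¹)]
    have hne1 : (∏ i : Fin n, (((k i.castSucc).factorial : ℝ))) ≠ 0 :=
      Finset.prod_ne_zero_iff.2 fun i _ => hfacne _
    rw [Finset.prod_inv_distrib]
    field_simp
  have hcont : ∀ k : Fin (n+1) → ℕ, Continuous (fun σ : Fin n → ℝ => c k σ • M k) := by
    intro k
    have h1 : Continuous (fun σ : Fin n → ℝ => c k σ) := by
      rw [show (fun σ : Fin n → ℝ => c k σ) = fun σ =>
          (∏ j : Fin (n+1), (((k j).factorial : ℝ))⁻¹) *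
            ((∏ i : Fin n, σ i ^ k i.castSucc) * (1 - ∑ i, σ i) ^ k (Fin.last n))
        from funext fun σ => hcoef k σ]
      refine continuous_const.mul (Continuous.mul ?_ ?_)
      · exact continuous_finset_prod _ fun i _ => (continuous_apply i).pow _
      · exact (continuous_const.sub (continuous_finset_sum _ fun i _ =>
          continuous_apply i)).pow _
    exact h1.smul continuous_const
  have hint : ∀ k : Fin (n+1) → ℕ,
      @Integrable (Matrix (Fin p) (Fin p) ℂ) _ SeminormedAddGroup.toContinuousENorm (Fin n → ℝ) _
        (fun σ : Fin n → ℝ => c k σ • M k) (volume.restrict (simplexSet n 1)) :=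
    fun k => ContinuousOn.integrableOn_compact (isCompact_simplexSet n 1)
      (hcont k).continuousOn
  have hnormint : ∀ k : Fin (n+1) → ℕ,
      ∫ σ in simplexSet n 1, ‖c k σ • M k‖
        = ((((∑ j, k j) + n).factorial : ℝ))⁻¹ * ‖M k‖ := by
    intro k
    have h1 : ∀ σ ∈ simplexSet n 1, ‖c k σ • M k‖ = c k σ * ‖M k‖ := by
      intro σ hσ
      rw [norm_smul, Real.norm_eq_abs, abs_of_nonneg (hcnonneg k σ hσ)]
    rw [setIntegral_congr_fun (measurableSet_simplexSet n 1) h1]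
    rw [MeasureTheory.integral_mul_const, hcint k]
  have hsummable : Summable (fun k : Fin (n+1) → ℕ =>
      ((((∑ j, k j) + n).factorial : ℝ))⁻¹ * ‖M k‖) := by
    set Q : ℝ := ∑ j ∈ Finset.range (n+1), ((p:ℝ) * ‖S j‖ + 1) with hQ
    have hQ1 : ∀ j ∈ Finset.range (n+1), ((p:ℝ) * ‖S j‖ + 1) ≤ Q :=
      fun j hj => Finset.single_le_sum (f := fun j => ((p:ℝ) * ‖S j‖ + 1))
        (fun i _ => by positivity) hj
    have hQ0 : 0 ≤ Q := Finset.sum_nonneg fun i _ => by positivity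
    set D : ℝ := ∏ j ∈ Finset.range n, ((p:ℝ)^2 * ‖A (j+1)‖) with hD
    have hD0 : 0 ≤ D := Finset.prod_nonneg fun i _ => by positivity
    have hbound : ∀ k : Fin (n+1) → ℕ,
        ((((∑ j, k j) + n).factorial : ℝ))⁻¹ * ‖M k‖
          ≤ D * ∏ j : Fin (n+1), (Q ^ k j / (k j).factorial) := by
      intro k
      have h2 : ‖M k‖ ≤ (∏ j : Fin (n+1), Q ^ k j) * D := by
        refine le_trans (descPowProd_norm_le S A n (K k)) ?_
        refine mul_le_mul_of_nonneg_right ?_ hD0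
        rw [← Fin.prod_univ_eq_prod_range (fun j => ((p:ℝ) * ‖S j‖ + 1) ^ K k j) (n+1)]
        refine Finset.prod_le_prod (fun j _ => by positivity) fun j _ => ?_
        have hKj : K k ((j : Fin (n+1)) : ℕ) = k j := by
          rw [hK]; simp only [dif_pos j.isLt]
        rw [hKj]
        exact pow_le_pow_left₀ (by positivity) (hQ1 (j:ℕ) (Finset.mem_range.2 j.isLt)) _
      have h3 : (∏ j : Fin (n+1), ((k j).factorial : ℝ))
          ≤ ((((∑ j, k j) + n).factorial : ℝ)) := by
        have hdvd : (∏ j : Fin (n+1), (k j).factorial) ∣ (∑ j : Fin (n+1), k j).factorial :=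
          Nat.prod_factorial_dvd_factorial_sum _ _
        have hle1 : (∏ j : Fin (n+1), (k j).factorial) ≤ (∑ j : Fin (n+1), k j).factorial :=
          Nat.le_of_dvd (Nat.factorial_pos _) hdvd
        have hle2 : (∑ j : Fin (n+1), k j).factorial ≤ ((∑ j, k j) + n).factorial :=
          Nat.factorial_le (by omega)
        exact_mod_cast le_trans hle1 hle2
      have hprodpos : (0:ℝ) < ∏ j : Fin (n+1), ((k j).factorial : ℝ) :=
        Finset.prod_pos fun j _ => by positivity
      have hinv : ((((∑ j, k j) + n).factorial : ℝ))⁻¹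
          ≤ (∏ j : Fin (n+1), ((k j).factorial : ℝ))⁻¹ :=
        inv_anti₀ hprodpos h3
      calc ((((∑ j, k j) + n).factorial : ℝ))⁻¹ * ‖M k‖
          ≤ (∏ j : Fin (n+1), ((k j).factorial : ℝ))⁻¹ * ((∏ j : Fin (n+1), Q ^ k j) * D) :=
            mul_le_mul hinv h2 (norm_nonneg _) (by positivity)
        _ = D * ∏ j : Fin (n+1), (Q ^ k j / (k j).factorial) := by
            rw [Finset.prod_div_distrib, div_eq_mul_inv]
            ring
    refine Summable.of_nonneg_of_le (fun k => by positivity) hbound ?_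
    exact (summable_pi_prod (g := fun t : ℕ => Q ^ t / t.factorial)
      (Real.summable_pow_div_factorial Q) (fun t => by positivity) (n+1)).mul_left D
  have hF_sum : Summable (fun k : Fin (n+1) → ℕ =>
      ∫ σ in simplexSet n 1, ‖c k σ • M k‖) :=
    hsummable.congr fun k => (hnormint k).symm
  have hmain := MeasureTheory.hasSum_integral_of_summable_integral_norm
    (F := fun (k : Fin (n+1) → ℕ) (σ : Fin n → ℝ) => c k σ • M k)
    (μ := volume.restrict (simplexSet n 1)) hint hF_sum
  have hval : (∫ σ in simplexSet n 1, ∑' k : Fin (n+1) → ℕ, c k σ • M k)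
      = ∫ σ in simplexSet n 1, descExpProd S A (s' σ) n :=
    integral_congr_ae (Filter.Eventually.of_forall fun σ => (hexp σ).tsum_eq)
  have hterm : ∀ k : Fin (n+1) → ℕ, (∫ σ in simplexSet n 1, c k σ • M k)
      = ((((∑ j, k j) + n).factorial : ℝ))⁻¹ • M k := by
    intro k
    rw [integral_smul_const, hcint k]
  erw [hval] at hmain
  have hmain2 : HasSum (fun k : Fin (n+1) → ℕ =>
      ((((∑ j, k j) + n).factorial : ℝ))⁻¹ • M k)
      (∫ σ in simplexSet n 1, descExpProd S A (s' σ) n) := by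
    have heq : (fun k : Fin (n+1) → ℕ => ((((∑ j, k j) + n).factorial : ℝ))⁻¹ • M k)
        = fun k => ∫ σ in simplexSet n 1, c k σ • M k := funext fun k => (hterm k).symm
    rw [heq]
    exact hmain
  refine ⟨?_, hmain2⟩
  refine hsummable.congr fun k => ?_
  rw [norm_smul, Real.norm_eq_abs, abs_of_nonneg (by positivity)]

end Final

/-- Simplex-integral expansion: for `S_j = A_1 + … + A_j`, the series
`Σ_{k_1,…,k_m ≥ 0} (1/(k_1+…+k_m+m−1)!) · S_m^{k_m} · A_m ⋯ S_2^{k_2} · A_2 · S_1^{k_1}`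
converges absolutely and equals
`∫_{{s ∈ ℝ^{m−1} : s_i ≥ 0, Σ s_i ≤ 1}} exp(s_m S_m) · A_m ⋯ exp(s_2 S_2) · A_2 · exp(s_1 S_1) ds`
with `s_m := 1 − s_1 − … − s_{m−1}`. (Everything written with 0-based indices.) -/
theorem matrix_simplex_integral_expansion (p m : ℕ) (hp : 1 ≤ p) (hm : 1 ≤ m)
    (A : ℕ → Matrix (Fin p) (Fin p) ℂ) :
    Summable (fun k : Fin m → ℕ =>
      ‖((Nat.factorial ((∑ j, k j) + m - 1) : ℝ))⁻¹ •
        descPowProd (fun j => ∑ i ∈ Finset.range (j + 1), A i) A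
          (fun j => if h : j < m then k ⟨j, h⟩ else 0) (m - 1)‖) ∧
    HasSum (fun k : Fin m → ℕ =>
      ((Nat.factorial ((∑ j, k j) + m - 1) : ℝ))⁻¹ •
        descPowProd (fun j => ∑ i ∈ Finset.range (j + 1), A i) A
          (fun j => if h : j < m then k ⟨j, h⟩ else 0) (m - 1))
      (∫ s in {s : Fin (m - 1) → ℝ | (∀ i, 0 ≤ s i) ∧ ∑ i, s i ≤ 1},
        descExpProd (fun j => ∑ i ∈ Finset.range (j + 1), A i) A
          (fun j => if h : j < m - 1 then s ⟨j, h⟩ else 1 - ∑ i, s i) (m - 1)) := by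
  obtain ⟨n, rfl⟩ : ∃ n, m = n + 1 := ⟨m - 1, by omega⟩
  exact final_version p n (fun j => ∑ i ∈ Finset.range (j + 1), A i) A
end

section
/- (Multiplicativity of relative cumulants over blocks) Let n ≥ 1, let α be a family of complex numbers indexed by the subsets of {1,…,n}, and let (β_{π,ν})_{π ≤ ν} be the unique family such that α_ν = Σ_{π ≤ π' ≤ ν} β_{π,π'} for all partitions π ≤ ν of {1,…,n}, where α_π = Π_{A ∈ π} α_A. For a block A of a partition ν and π ≤ ν, let π↾A denote the partition of the set A whose blocks are the blocks of π contained in A, and let (β^{(A)}_{ρ,η}) be the family defined analogously from the restriction of α to subsets of A (indexed by pairs of partitions of A). Then for every pair of partitions π ≤ ν of {1,…,n}: β_{π,ν} = Π_{A ∈ ν} β^{(A)}_{π↾A, 1_A}, where 1_A is the one-block partition of A. -/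
open scoped Classical

namespace RelCum

variable {n : ℕ}

lemma le_indiscrete {A : Finset (Fin n)} (P : Finpartition A) (hA : A ≠ ⊥) :
    P ≤ Finpartition.indiscrete hA := fun b hb =>
  ⟨A, by simp [Finpartition.indiscrete], P.le hb⟩

lemma sup_filter {s : Finset (Fin n)} {π ν : Finpartition s} (h : π ≤ ν)
    {A : Finset (Fin n)} (hA : A ∈ ν.parts) :
    (π.parts.filter (fun b => b ⊆ A)).sup id = A := by
  apply le_antisymm
  · exact Finset.sup_le fun b hb => (Finset.mem_filter.1 hb).2
  · intro a ha
    obtain ⟨b, hb, hab⟩ := π.exists_mem (ν.le hA ha)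
    obtain ⟨c, hc, hbc⟩ := h hb
    have hcA : c = A := ν.eq_of_mem_parts hc hA (hbc hab) ha
    exact Finset.le_sup (f := id) (Finset.mem_filter.2 ⟨hb, hcA ▸ hbc⟩) hab

/-- Restriction of a partition to a set `A`; junk value if the blocks inside `A` don't cover. -/
noncomputable def restr {s : Finset (Fin n)} (π : Finpartition s) (A : Finset (Fin n)) :
    Finpartition A :=
  if h : (π.parts.filter (fun b => b ⊆ A)).sup id = A then
    { parts := π.parts.filter (fun b => b ⊆ A)
      supIndep := π.supIndep.subset (Finset.filter_subset _ _)
      sup_parts := h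
      bot_notMem := fun hb => π.bot_notMem (Finset.mem_filter.1 hb).1 }
  else Finpartition.ofErase {A} (Finset.supIndep_singleton _ _) Finset.sup_singleton

lemma restr_parts {s : Finset (Fin n)} {π ν : Finpartition s} (h : π ≤ ν)
    {A : Finset (Fin n)} (hA : A ∈ ν.parts) :
    (restr π A).parts = π.parts.filter (fun b => b ⊆ A) := by
  rw [restr, dif_pos (sup_filter h hA)]

lemma mem_restr_parts {s : Finset (Fin n)} {π ν : Finpartition s} (h : π ≤ ν)
    {A : Finset (Fin n)} (hA : A ∈ ν.parts) {b : Finset (Fin n)} :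
    b ∈ (restr π A).parts ↔ b ∈ π.parts ∧ b ⊆ A := by
  rw [restr_parts h hA, Finset.mem_filter]

lemma restr_self {A : Finset (Fin n)} (ρ : Finpartition A) : restr ρ A = ρ := by
  have hf : ρ.parts.filter (fun b => b ⊆ A) = ρ.parts :=
    Finset.filter_true_of_mem fun b hb => ρ.le hb
  ext b
  rw [restr, dif_pos (by rw [hf]; exact ρ.sup_parts)]
  simp only [hf]


lemma restr_le {s : Finset (Fin n)} {π π' ν : Finpartition s} (h1 : π ≤ π') (h2 : π' ≤ ν)
    {A : Finset (Fin n)} (hA : A ∈ ν.parts) : restr π A ≤ restr π' A := by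
  intro b hb
  rw [mem_restr_parts (h1.trans h2) hA] at hb
  obtain ⟨c, hc, hbc⟩ := h1 hb.1
  refine ⟨c, (mem_restr_parts h2 hA).2 ⟨hc, ?_⟩, hbc⟩
  obtain ⟨D, hD, hcD⟩ := h2 hc
  obtain ⟨a, ha⟩ := π.nonempty_of_mem_parts hb.1
  rwa [ν.eq_of_mem_parts hD hA (hcD (hbc ha)) (hb.2 ha)] at hcD

lemma restr_part_self {s : Finset (Fin n)} (η : Finpartition s)
    {A : Finset (Fin n)} (hA : A ∈ η.parts) (hA0 : A ≠ ⊥) :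
    restr η A = Finpartition.indiscrete hA0 := by
  ext b
  rw [mem_restr_parts le_rfl hA, Finpartition.indiscrete_parts, Finset.mem_singleton]
  constructor
  · rintro ⟨hb, hbA⟩
    obtain ⟨a, ha⟩ := η.nonempty_of_mem_parts hb
    exact η.eq_of_mem_parts hb hA ha (hbA ha)
  · rintro rfl; exact ⟨hA, le_rfl⟩

lemma restr_restr {s : Finset (Fin n)} {ρ σ η : Finpartition s} (h1 : ρ ≤ σ) (h2 : σ ≤ η)
    {D : Finset (Fin n)} (hD : D ∈ η.parts)
    {E : Finset (Fin n)} (hE : E ∈ (restr σ D).parts) :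
    restr (restr ρ D) E = restr ρ E := by
  rw [mem_restr_parts h2 hD] at hE
  ext b
  rw [mem_restr_parts (restr_le h1 h2 hD) (by rwa [mem_restr_parts h2 hD]),
    mem_restr_parts h1 hE.1, mem_restr_parts (h1.trans h2) hD]
  constructor
  · rintro ⟨⟨hb, _⟩, hbE⟩; exact ⟨hb, hbE⟩
  · rintro ⟨hb, hbE⟩; exact ⟨⟨hb, hbE.trans hE.2⟩, hbE⟩

lemma bind_le {s : Finset (Fin n)} (η : Finpartition s) (p : ∀ D ∈ η.parts, Finpartition D) :
    η.bind p ≤ η := by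
  intro b hb
  rw [Finpartition.mem_bind] at hb
  obtain ⟨D, hD, hbD⟩ := hb
  exact ⟨D, hD, (p D hD).le hbD⟩

lemma restr_bind {s : Finset (Fin n)} (η : Finpartition s) (p : ∀ D ∈ η.parts, Finpartition D)
    {D : Finset (Fin n)} (hD : D ∈ η.parts) : restr (η.bind p) D = p D hD := by
  ext b
  rw [mem_restr_parts (bind_le η p) hD, Finpartition.mem_bind]
  constructor
  · rintro ⟨⟨D', hD', hb⟩, hbD⟩
    obtain ⟨a, ha⟩ := (p D' hD').nonempty_of_mem_parts hb
    obtain rfl : D' = D := η.eq_of_mem_parts hD' hD ((p D' hD').le hb ha) (hbD ha)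
    exact hb
  · intro hb
    exact ⟨⟨D, hD, hb⟩, (p D hD).le hb⟩

lemma bind_restr {s : Finset (Fin n)} {σ η : Finpartition s} (h : σ ≤ η) :
    η.bind (fun D _ => restr σ D) = σ := by
  ext b
  rw [Finpartition.mem_bind]
  constructor
  · rintro ⟨D, hD, hb⟩
    exact ((mem_restr_parts h hD).1 hb).1
  · intro hb
    obtain ⟨D, hD, hbD⟩ := h hb
    exact ⟨D, hD, (mem_restr_parts h hD).2 ⟨hb, hbD⟩⟩


lemma sum_pi {s : Finset (Fin n)} {ρ η : Finpartition s} (hρη : ρ ≤ η)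
    (F : ∀ D : Finset (Fin n), Finpartition D → ℂ) :
    ∑ p ∈ η.parts.pi (fun D => Finset.univ.filter (fun σ : Finpartition D => restr ρ D ≤ σ)),
        ∏ D ∈ η.parts.attach, F D.1 (p D.1 D.2)
      = ∑ σ ∈ Finset.univ.filter (fun σ : Finpartition s => ρ ≤ σ ∧ σ ≤ η),
          ∏ D ∈ η.parts.attach, F D.1 (restr σ D.1) := by
  refine Finset.sum_bij' (fun p _ => η.bind (fun D hD => p D hD))
    (fun σ _ => fun D _ => restr σ D) ?_ ?_ ?_ ?_ ?_
  · intro p hp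
    rw [Finset.mem_pi] at hp
    rw [Finset.mem_filter]
    refine ⟨Finset.mem_univ _, ?_, bind_le η _⟩
    intro b hb
    obtain ⟨D, hD, hbD⟩ := hρη hb
    have h1 : b ∈ (restr ρ D).parts := (mem_restr_parts hρη hD).2 ⟨hb, hbD⟩
    have h2 := (Finset.mem_filter.1 (hp D hD)).2
    obtain ⟨c, hc, hbc⟩ := h2 h1
    exact ⟨c, Finpartition.mem_bind.2 ⟨D, hD, hc⟩, hbc⟩
  · intro σ hσ
    rw [Finset.mem_filter] at hσ
    rw [Finset.mem_pi]
    intro D hD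
    rw [Finset.mem_filter]
    exact ⟨Finset.mem_univ _, restr_le hσ.2.1 hσ.2.2 hD⟩
  · intro p hp
    funext D hD
    exact restr_bind η _ hD
  · intro σ hσ
    rw [Finset.mem_filter] at hσ
    exact bind_restr hσ.2.2
  · intro p hp
    exact Finset.prod_congr rfl fun D _ => by rw [restr_bind η _ D.2]

lemma prod_parts_split {s : Finset (Fin n)} {σ η : Finpartition s} (h : σ ≤ η)
    (f : Finset (Fin n) → ℂ) :
    ∏ E ∈ σ.parts, f E = ∏ D ∈ η.parts.attach, ∏ E ∈ (restr σ D.1).parts, f E := by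
  conv_lhs => rw [← bind_restr h]
  rw [Finpartition.bind_parts]
  rw [Finset.prod_biUnion]
  intro D hD D' hD' hDD'
  simp only [Finset.disjoint_left]
  intro b hb hb'
  rw [mem_restr_parts h D.2] at hb
  rw [mem_restr_parts h D'.2] at hb'
  obtain ⟨a, ha⟩ := σ.nonempty_of_mem_parts hb.1
  exact hDD' (Subtype.ext (η.eq_of_mem_parts D.2 D'.2 (hb.2 ha) (hb'.2 ha)))

lemma cancel_sum {γ : Type*} {s : Finset γ} {f g : γ → ℂ} {x : γ} (hx : x ∈ s)
    (h : ∑ y ∈ s, f y = ∑ y ∈ s, g y) (hfg : ∀ y ∈ s, y ≠ x → f y = g y) : f x = g x := by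
  rw [← Finset.add_sum_erase s f hx, ← Finset.add_sum_erase s g hx] at h
  have : ∑ y ∈ s.erase x, f y = ∑ y ∈ s.erase x, g y :=
    Finset.sum_congr rfl fun y hy => hfg y (Finset.mem_of_mem_erase hy) (Finset.ne_of_mem_erase hy)
  rw [this] at h
  exact add_right_cancel h


lemma attach_prod_eq {s : Finset (Fin n)} (τ : Finpartition s) (g : ∀ E : Finset (Fin n), E ≠ ⊥ → ℂ) :
    ∏ E ∈ τ.parts.attach, g E.1 (τ.ne_bot E.2)
      = ∏ E ∈ τ.parts, if h : E = ⊥ then 0 else g E h := by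
  rw [← Finset.prod_attach (τ.parts) (fun E => if h : E = ⊥ then 0 else g E h)]
  exact Finset.prod_congr rfl fun E _ => (dif_neg (τ.ne_bot E.2)).symm

variable (α : Finset (Fin n) → ℂ)
    (B : ∀ A : Finset (Fin n), Finpartition A → Finpartition A → ℂ)
    (hB : ∀ A : Finset (Fin n), ∀ ρ η : Finpartition A, ρ ≤ η →
      (∏ C ∈ η.parts, α C) =
        ∑ ρ' ∈ Finset.univ.filter (fun ρ' => ρ ≤ ρ' ∧ ρ' ≤ η), B A ρ ρ')

include hB

lemma empty_case {A : Finset (Fin n)} (hA0 : A = ⊥) (ρ η : Finpartition A) (hρη : ρ ≤ η) :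
    B A ρ η = ∏ D ∈ η.parts.attach,
      B D.1 (restr ρ D.1) (Finpartition.indiscrete (η.ne_bot D.2)) := by
  subst hA0
  have hparts : ∀ σ : Finpartition (⊥ : Finset (Fin n)), σ.parts = ∅ := fun σ =>
    Finpartition.parts_eq_empty_iff.2 rfl
  have huniq : ∀ σ τ : Finpartition (⊥ : Finset (Fin n)), σ = τ := fun σ τ => by
    ext b; rw [hparts, hparts]
  have h1 := hB ⊥ ρ η hρη
  rw [hparts η] at h1
  simp only [Finset.prod_empty] at h1
  have hfilter : Finset.univ.filter
      (fun σ : Finpartition (⊥ : Finset (Fin n)) => ρ ≤ σ ∧ σ ≤ η) = {η} := by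
    ext σ
    simp only [Finset.mem_filter, Finset.mem_univ, true_and, Finset.mem_singleton]
    constructor
    · intro _; exact huniq σ η
    · rintro rfl; exact ⟨hρη, le_rfl⟩
  rw [hfilter, Finset.sum_singleton] at h1
  have h2 : η.parts.attach = ∅ := by rw [hparts η]; rfl
  rw [h2, Finset.prod_empty, ← h1]

lemma main_lemma : ∀ k (A : Finset (Fin n)), A.card ≤ k → ∀ ρ η : Finpartition A, ρ ≤ η →
    B A ρ η = ∏ D ∈ η.parts.attach,
      B D.1 (restr ρ D.1) (Finpartition.indiscrete (η.ne_bot D.2)) := by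
  intro k
  induction k with
  | zero =>
    intro A hA ρ η hρη
    exact empty_case α B hB (Finset.card_eq_zero.1 (Nat.le_zero.1 hA)) ρ η hρη
  | succ k ih =>
    intro A hA ρ η
    induction η using WellFoundedLT.induction with
    | ind η IH =>
    intro hρη
    by_cases hA0 : A = ⊥
    · exact empty_case α B hB hA0 ρ η hρη
    by_cases htop : A ∈ η.parts
    · -- η is the indiscrete partition
      have hparts : η.parts = {A} := by
        ext b
        rw [Finset.mem_singleton]
        constructor
        · intro hb
          by_contra hne
          exact η.ne_bot hb ((η.disjoint hb htop hne).eq_bot_of_le (η.le hb))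
        · rintro rfl; exact htop
      have hη : η = Finpartition.indiscrete hA0 := by
        ext b; rw [hparts, Finpartition.indiscrete_parts]
      rw [Finset.prod_eq_single_of_mem (⟨A, htop⟩ : {x // x ∈ η.parts})
        (Finset.mem_attach _ _) (fun b _ hb => absurd (Subtype.ext
          (Finset.mem_singleton.1 (hparts ▸ b.2))) hb)]
      rw [restr_self]
      congr 1
    · -- all parts of η are strictly smaller than A
      have hcard : ∀ D ∈ η.parts, D.card ≤ k := by
        intro D hD
        have hss : D ⊂ A := lt_of_le_of_ne (η.le hD) (by rintro rfl; exact htop hD)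
        have := Finset.card_lt_card hss
        omega
      have key : ∑ σ ∈ Finset.univ.filter (fun σ : Finpartition A => ρ ≤ σ ∧ σ ≤ η), B A ρ σ
          = ∑ σ ∈ Finset.univ.filter (fun σ : Finpartition A => ρ ≤ σ ∧ σ ≤ η),
              ∏ D ∈ η.parts.attach, B D.1 (restr ρ D.1) (restr σ D.1) := by
        calc ∑ σ ∈ Finset.univ.filter (fun σ : Finpartition A => ρ ≤ σ ∧ σ ≤ η), B A ρ σ
            = ∏ C ∈ η.parts, α C := (hB A ρ η hρη).symm
          _ = ∏ D ∈ η.parts, ∑ σ ∈ Finset.univ.filter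
                (fun σ : Finpartition D => restr ρ D ≤ σ), B D (restr ρ D) σ := by
              refine Finset.prod_congr rfl fun D hD => ?_
              have hD0 : D ≠ ⊥ := η.ne_bot hD
              have h1 := hB D (restr ρ D) (Finpartition.indiscrete hD0) (le_indiscrete _ hD0)
              simp only [Finpartition.indiscrete_parts, Finset.prod_singleton] at h1
              rw [h1]
              refine Finset.sum_congr ?_ fun _ _ => rfl
              ext σ
              simp only [Finset.mem_filter, Finset.mem_univ, true_and]
              exact ⟨fun h => h.1, fun h => ⟨h, le_indiscrete σ hD0⟩⟩
          _ = ∑ p ∈ η.parts.pi (fun D => Finset.univ.filter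
                (fun σ : Finpartition D => restr ρ D ≤ σ)),
                ∏ D ∈ η.parts.attach, B D.1 (restr ρ D.1) (p D.1 D.2) :=
              Finset.prod_sum η.parts _ (fun D σ => B D (restr ρ D) σ)
          _ = ∑ σ ∈ Finset.univ.filter (fun σ : Finpartition A => ρ ≤ σ ∧ σ ≤ η),
                ∏ D ∈ η.parts.attach, B D.1 (restr ρ D.1) (restr σ D.1) :=
              sum_pi hρη (fun D σ => B D (restr ρ D) σ)
      have hterm : ∀ σ ∈ Finset.univ.filter (fun σ : Finpartition A => ρ ≤ σ ∧ σ ≤ η),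
          σ ≠ η → B A ρ σ = ∏ D ∈ η.parts.attach, B D.1 (restr ρ D.1) (restr σ D.1) := by
        intro σ hσ hne
        rw [Finset.mem_filter] at hσ
        obtain ⟨-, hρσ, hση⟩ := hσ
        rw [IH σ (lt_of_le_of_ne hση hne) hρσ,
          attach_prod_eq σ (fun E h => B E (restr ρ E) (Finpartition.indiscrete h)),
          prod_parts_split hση]
        refine Finset.prod_congr rfl fun D _ => ?_
        rw [ih D.1 (hcard D.1 D.2) (restr ρ D.1) (restr σ D.1) (restr_le hρσ hση D.2),
          attach_prod_eq (restr σ D.1)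
            (fun E h => B E (restr (restr ρ D.1) E) (Finpartition.indiscrete h))]
        refine Finset.prod_congr rfl fun E hE => ?_
        have hE0 : E ≠ ⊥ := (restr σ D.1).ne_bot hE
        rw [dif_neg hE0, dif_neg hE0, restr_restr hρσ hση D.2 hE]
      have hηmem : η ∈ Finset.univ.filter (fun σ : Finpartition A => ρ ≤ σ ∧ σ ≤ η) :=
        Finset.mem_filter.2 ⟨Finset.mem_univ _, hρη, le_rfl⟩
      have hfin := cancel_sum hηmem key hterm
      rw [hfin]
      refine Finset.prod_congr rfl fun D _ => ?_
      rw [restr_part_self η D.2 (η.ne_bot D.2)]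


omit hB in
lemma beta_eq
    (β : Finpartition (Finset.univ : Finset (Fin n)) →
      Finpartition (Finset.univ : Finset (Fin n)) → ℂ)
    (hβ : ∀ π ν : Finpartition (Finset.univ : Finset (Fin n)), π ≤ ν →
      (∏ A ∈ ν.parts, α A) =
        ∑ π' ∈ Finset.univ.filter (fun π' => π ≤ π' ∧ π' ≤ ν), β π π')
    (hB' : ∀ ρ η : Finpartition (Finset.univ : Finset (Fin n)), ρ ≤ η →
      (∏ C ∈ η.parts, α C) =
        ∑ ρ' ∈ Finset.univ.filter (fun ρ' => ρ ≤ ρ' ∧ ρ' ≤ η), B Finset.univ ρ ρ') :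
    ∀ π ν : Finpartition (Finset.univ : Finset (Fin n)), π ≤ ν →
      β π ν = B Finset.univ π ν := by
  intro π ν
  induction ν using WellFoundedLT.induction with
  | ind ν IH =>
    intro hπν
    have key := (hβ π ν hπν).symm.trans (hB' π ν hπν)
    exact cancel_sum (Finset.mem_filter.2 ⟨Finset.mem_univ _, hπν, le_rfl⟩) key
      (fun σ hσ hne => IH σ (lt_of_le_of_ne (Finset.mem_filter.1 hσ).2.2 hne)
        (Finset.mem_filter.1 hσ).2.1)

end RelCum


/-- Multiplicativity of relative cumulants over blocks: if `β` is the family of relative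
coefficients of `α` (i.e. `α_ν = Σ_{π ≤ π' ≤ ν} β_{π,π'}` for all pairs of partitions `π ≤ ν` of
`{1,…,n}`), and if for each subset `A ⊆ {1,…,n}` the family `B A` is the analogous family of
relative coefficients built from the restriction of `α` to subsets of `A`, then for all `π ≤ ν`:
`β_{π,ν} = Π_{A ∈ ν} B^{(A)}_{π↾A, 1_A}`, where `π↾A` is the partition of the block `A` whose
blocks are the blocks of `π` contained in `A`, and `1_A` is the one-block partition of `A`. -/
theorem relative_cumulants_multiplicative (n : ℕ) (hn : 1 ≤ n)
    (α : Finset (Fin n) → ℂ)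
    (β : Finpartition (Finset.univ : Finset (Fin n)) →
      Finpartition (Finset.univ : Finset (Fin n)) → ℂ)
    (hβ : ∀ π ν : Finpartition (Finset.univ : Finset (Fin n)), π ≤ ν →
      (∏ A ∈ ν.parts, α A) =
        ∑ π' ∈ Finset.univ.filter (fun π' => π ≤ π' ∧ π' ≤ ν), β π π')
    (B : ∀ A : Finset (Fin n), Finpartition A → Finpartition A → ℂ)
    (hB : ∀ A : Finset (Fin n), ∀ ρ η : Finpartition A, ρ ≤ η →
      (∏ C ∈ η.parts, α C) =
        ∑ ρ' ∈ Finset.univ.filter (fun ρ' => ρ ≤ ρ' ∧ ρ' ≤ η), B A ρ ρ') :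
    ∀ π ν : Finpartition (Finset.univ : Finset (Fin n)), π ≤ ν →
      ∀ ρ : ∀ A ∈ ν.parts, Finpartition A,
        (∀ (A : Finset (Fin n)) (hA : A ∈ ν.parts),
          (ρ A hA).parts = π.parts.filter (fun b => b ⊆ A)) →
        β π ν = ∏ A ∈ ν.parts.attach,
          B A.1 (ρ A.1 A.2)
            (Finpartition.indiscrete (ne_of_mem_of_not_mem A.2 ν.bot_notMem)) := by
  intro π ν hπν ρ hρ
  have hbeta : β π ν = B Finset.univ π ν :=
    RelCum.beta_eq α B β hβ (hB Finset.univ) π ν hπν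
  have hmain := RelCum.main_lemma α B hB n Finset.univ (by simp) π ν hπν
  rw [hbeta, hmain]
  refine Finset.prod_congr rfl fun D _ => ?_
  have hrD : ρ D.1 D.2 = RelCum.restr π D.1 := by
    ext b
    rw [hρ D.1 D.2, RelCum.restr_parts hπν D.2]
  rw [hrD]
end
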